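/- arXiv:1911.13006 — 6 statements merged into one kernel-verified Lean document; each statement's English description precedes it below -/
import Mathlib

section
/- Let $a_1,\dots,a_n$ be real numbers with $\sum_{k=1}^n a_k = 0$. Then there exists a permutation $\sigma$ of $\{1,\dots,n\}$ such that for every $m \in \{1,\dots,n\}$, $|\sum_{k=1}^m a_{\sigma(k)}| \leq \max_{1\leq k\leq n} |a_k|$. -/
open MeasureTheory Set

private lemma sum_neg_of_forall_neg : ∀ l : List ℝ, l ≠ [] → (∀ x ∈ l, x < 0) → l.sum < 0 := by
  intro l
  induction l with
  | nil => intro h; simp at h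
  | cons y t ih =>
    intro _ hc
    rcases eq_or_ne t [] with rfl | hne'
    · simpa using hc y (by simp)
    · have ht := ih hne' (fun i hi => hc i (List.mem_cons_of_mem _ hi))
      have hy := hc y (by simp)
      simp only [List.sum_cons]
      linarith

private lemma exists_nonneg_of_sum_nonneg (l : List ℝ) (hne : l ≠ []) (hs : 0 ≤ l.sum) :
    ∃ x ∈ l, 0 ≤ x := by
  by_contra hc
  push_neg at hc
  have := sum_neg_of_forall_neg l hne hc
  linarith

private lemma sum_pos_of_forall_pos : ∀ l : List ℝ, l ≠ [] → (∀ x ∈ l, 0 < x) → 0 < l.sum := by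
  intro l
  induction l with
  | nil => intro h; simp at h
  | cons y t ih =>
    intro _ hc
    rcases eq_or_ne t [] with rfl | hne'
    · simpa using hc y (by simp)
    · have ht := ih hne' (fun i hi => hc i (List.mem_cons_of_mem _ hi))
      have hy := hc y (by simp)
      simp only [List.sum_cons]
      linarith

private lemma exists_nonpos_of_sum_nonpos (l : List ℝ) (hne : l ≠ []) (hs : l.sum ≤ 0) :
    ∃ x ∈ l, x ≤ 0 := by
  by_contra hc
  push_neg at hc
  have := sum_pos_of_forall_pos l hne hc
  linarith

private lemma key {ι : Type*} [DecidableEq ι] (a : ι → ℝ) (M : ℝ) :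
    ∀ (N : ℕ) (l : List ι), l.length ≤ N → ∀ c : ℝ, |c| ≤ M →
      (∀ i ∈ l, |a i| ≤ M) → c + (l.map a).sum = 0 →
      ∃ l' : List ι, l'.Perm l ∧ ∀ m : ℕ, |c + ((l'.take m).map a).sum| ≤ M := by
  intro N
  induction N with
  | zero =>
    intro l hl c hc _ _
    have : l = [] := List.length_eq_zero_iff.mp (Nat.le_zero.mp hl)
    subst this
    exact ⟨[], List.Perm.refl _, fun m => by simpa using hc⟩
  | succ N ih =>
    intro l hl c hc hmem hsum
    rcases eq_or_ne l [] with rfl | hne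
    · exact ⟨[], List.Perm.refl _, fun m => by simpa using hc⟩
    · have hM : 0 ≤ M := le_trans (abs_nonneg c) hc
      -- pick x in l with sign opposite to c
      have hpick : ∃ x ∈ l, |c + a x| ≤ M := by
        rcases le_or_gt c 0 with hc0 | hc0
        · have hs : 0 ≤ (l.map a).sum := by linarith
          obtain ⟨y, hy, hy0⟩ := exists_nonneg_of_sum_nonneg _ (by simpa using hne) hs
          simp only [List.mem_map] at hy
          obtain ⟨x, hx, rfl⟩ := hy
          refine ⟨x, hx, abs_le.mpr ⟨?_, ?_⟩⟩
          · have := (abs_le.mp hc).1; linarith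
          · have := (abs_le.mp (hmem x hx)).2; linarith
        · have hs : (l.map a).sum ≤ 0 := by linarith
          obtain ⟨y, hy, hy0⟩ := exists_nonpos_of_sum_nonpos _ (by simpa using hne) hs
          simp only [List.mem_map] at hy
          obtain ⟨x, hx, rfl⟩ := hy
          refine ⟨x, hx, abs_le.mpr ⟨?_, ?_⟩⟩
          · have := (abs_le.mp (hmem x hx)).1; linarith
          · have := (abs_le.mp hc).2; linarith
      obtain ⟨x, hx, hcx⟩ := hpick
      have hperm : l.Perm (x :: l.erase x) := List.perm_cons_erase hx
      have hlen : (l.erase x).length ≤ N := by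
        have := List.length_erase_of_mem hx
        omega
      have hsum' : (c + a x) + ((l.erase x).map a).sum = 0 := by
        have := hperm.map a |>.sum_eq
        simp only [List.map_cons, List.sum_cons] at this
        linarith
      obtain ⟨l'', hp'', hb''⟩ := ih (l.erase x) hlen (c + a x) hcx
        (fun i hi => hmem i (List.mem_of_mem_erase hi)) hsum'
      refine ⟨x :: l'', (hp''.cons x).trans hperm.symm, fun m => ?_⟩
      cases m with
      | zero => simpa using hc
      | succ k =>
        have := hb'' k
        simpa [List.take_succ_cons, add_assoc] using this

private lemma take_sum_eq (l : List ℝ) :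
    ∀ m : ℕ, m ≤ l.length → (l.take m).sum = ∑ i ∈ Finset.range m, l.getD i 0 := by
  intro m
  induction m with
  | zero => simp
  | succ k ih =>
    intro hm
    have hk : k < l.length := hm
    rw [List.sum_take_succ _ _ hk, ih (le_of_lt hk), Finset.sum_range_succ,
      List.getD_eq_getElem _ _ hk]

theorem stmt0 (n : ℕ) (a : Fin n → ℝ) (h : ∑ k, a k = 0) :
    ∃ σ : Equiv.Perm (Fin n), ∀ m : Fin n,
      |∑ k ∈ Finset.Iic m, a (σ k)| ≤ ⨆ k, |a k| := by
  rcases Nat.eq_zero_or_pos n with rfl | hn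
  · exact ⟨1, fun m => m.elim0⟩
  set M : ℝ := ⨆ k, |a k| with hM
  have hbdd : BddAbove (Set.range fun k => |a k|) := Set.Finite.bddAbove (Set.finite_range _)
  have hle : ∀ k, |a k| ≤ M := fun k => le_ciSup hbdd k
  have hM0 : 0 ≤ M := le_trans (abs_nonneg _) (hle ⟨0, hn⟩)
  have hsum0 : (0 : ℝ) + ((List.finRange n).map a).sum = 0 := by
    rw [zero_add, ← h, Fin.sum_univ_def]
  obtain ⟨l', hperm, hbound⟩ := key a M n (List.finRange n)
    (by simp) 0 (by simpa using hM0) (fun i _ => hle i) hsum0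
  have hlen : l'.length = n := by
    rw [hperm.length_eq, List.length_finRange]
  have hnodup : l'.Nodup := hperm.nodup_iff.mpr (List.nodup_finRange n)
  set f : Fin n → Fin n := fun i => l'.get (Fin.cast hlen.symm i) with hf
  have hinj : Function.Injective f := by
    intro i j hij
    have := List.nodup_iff_injective_get.mp hnodup hij
    exact Fin.cast_injective _ this
  obtain ⟨σ, hσ⟩ : ∃ σ : Equiv.Perm (Fin n), ∀ i, σ i = f i :=
    ⟨Equiv.ofBijective f ((Fintype.bijective_iff_injective_and_card f).mpr ⟨hinj, rfl⟩),
      fun i => rfl⟩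
  refine ⟨σ, fun m => ?_⟩
  have hmlt : (m : ℕ) + 1 ≤ n := m.isLt
  have key1 : ∑ k ∈ Finset.Iic m, a (σ k) = ∑ i ∈ Finset.range (m + 1), (l'.map a).getD i 0 := by
    refine Finset.sum_bij' (fun k _ => (k : ℕ)) (fun i hi => (⟨i, by
      simp only [Finset.mem_range] at hi; omega⟩ : Fin n)) ?_ ?_ ?_ ?_ ?_
    · intro k hk
      simp only [Finset.mem_Iic] at hk
      simp only [Finset.mem_range]
      exact Nat.lt_succ_of_le hk
    · intro i hi
      simp only [Finset.mem_range] at hi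
      simp only [Finset.mem_Iic, Fin.le_def]
      omega
    · intro k _; simp
    · intro i _; simp
    · intro k hk
      have hkn : (k : ℕ) < l'.length := by rw [hlen]; exact k.isLt
      rw [List.getD_eq_getElem _ _ (by simpa using hkn), List.getElem_map]
      rw [hσ]
      simp only [hf, List.get_eq_getElem]
      congr 1
  rw [key1, ← take_sum_eq (l'.map a) (m + 1) (by simpa [hlen] using hmlt)]
  have := hbound (m + 1)
  rwa [zero_add, List.map_take] at this
end

section
/- Let $(a_{i,j})$ be an $n \times m$ matrix of real numbers such that $|a_{i,j}| \leq C$ for all $i,j$ and $\sum_{j=1}^m a_{i,j} = 0$ for each $i = 1,\dots,n$. Then there exist permutations $\sigma_1,\dots,\sigma_n$ of $\{1,\dots,m\}$ such that $|\sum_{i=1}^k a_{i,\sigma_i(j)}| \leq 2C$ for all $k = 1,\dots,n$ and $j = 1,\dots,m$. -/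
open MeasureTheory Set

/-- One-step matching: given current sums `S` with pairwise differences ≤ 2C and a new
row `b` with pairwise differences ≤ 2C, there is a permutation keeping pairwise
differences of the new sums ≤ 2C. -/
lemma step_perm {m : ℕ} (C : ℝ) (S b : Fin m → ℝ)
    (hS : ∀ j j' : Fin m, S j - S j' ≤ 2 * C)
    (hb : ∀ l l' : Fin m, b l - b l' ≤ 2 * C) :
    ∃ σ : Equiv.Perm (Fin m), ∀ j j' : Fin m,
      (S j + b (σ j)) - (S j' + b (σ j')) ≤ 2 * C := by
  classical
  set τ : Equiv.Perm (Fin m) := Tuple.sort (fun j => -S j) with hτ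
  set τb : Equiv.Perm (Fin m) := Tuple.sort b with hτb
  refine ⟨Equiv.trans τ.symm τb, ?_⟩
  intro j j'
  have hmono1 : Monotone ((fun j => -S j) ∘ τ) := Tuple.monotone_sort _
  have hmono2 : Monotone (b ∘ τb) := Tuple.monotone_sort b
  have hj : τ (τ.symm j) = j := τ.apply_symm_apply j
  have hj' : τ (τ.symm j') = j' := τ.apply_symm_apply j'
  simp only [Equiv.trans_apply]
  rcases le_total (τ.symm j) (τ.symm j') with h | h
  · have h2 : b (τb (τ.symm j)) ≤ b (τb (τ.symm j')) := hmono2 h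
    have h1 : S j - S j' ≤ 2 * C := hS j j'
    linarith
  · have h2 : -S (τ (τ.symm j')) ≤ -S (τ (τ.symm j)) := hmono1 h
    rw [hj, hj'] at h2
    have h1 : b (τb (τ.symm j)) - b (τb (τ.symm j')) ≤ 2 * C := hb _ _
    linarith

theorem stmt1 (n m : ℕ) (C : ℝ) (a : Fin n → Fin m → ℝ)
    (hbound : ∀ i j, |a i j| ≤ C) (hrow : ∀ i, ∑ j, a i j = 0) :
    ∃ σ : Fin n → Equiv.Perm (Fin m), ∀ (k : Fin n) (j : Fin m),
      |∑ i ∈ Finset.Iic k, a i ((σ i) j)| ≤ 2 * C := by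
  classical
  rcases Nat.eq_zero_or_pos n with hn | hn
  · subst hn; exact ⟨fun _ => 1, fun k => k.elim0⟩
  rcases Nat.eq_zero_or_pos m with hm | hm
  · subst hm; exact ⟨fun _ => 1, fun k j => j.elim0⟩
  have hC : 0 ≤ C := le_trans (abs_nonneg _) (hbound ⟨0, hn⟩ ⟨0, hm⟩)
  -- main induction: permutations good for all cutoffs k ≤ K
  have key : ∀ K : ℕ, ∃ σ : Fin n → Equiv.Perm (Fin m), ∀ k : ℕ, k ≤ K →
      ∀ j j' : Fin m,
        (∑ i ∈ Finset.univ.filter (fun i : Fin n => i.val < k), a i (σ i j))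
        - (∑ i ∈ Finset.univ.filter (fun i : Fin n => i.val < k), a i (σ i j')) ≤ 2 * C := by
    intro K
    induction K with
    | zero =>
      refine ⟨fun _ => 1, ?_⟩
      intro k hk j j'
      have hk0 : k = 0 := Nat.le_zero.mp hk
      subst hk0
      simp [hC]
    | succ K ih =>
      obtain ⟨σ₀, hσ₀⟩ := ih
      by_cases hKn : K < n
      · set i₀ : Fin n := ⟨K, hKn⟩ with hi₀
        have hi₀val : i₀.val = K := rfl
        set S : Fin m → ℝ :=
          fun j => ∑ i ∈ Finset.univ.filter (fun i : Fin n => i.val < K), a i (σ₀ i j) with hSdef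
        have hS : ∀ j j' : Fin m, S j - S j' ≤ 2 * C := hσ₀ K le_rfl
        have hb : ∀ l l' : Fin m, a i₀ l - a i₀ l' ≤ 2 * C := by
          intro l l'
          have h1 := abs_le.mp (hbound i₀ l)
          have h2 := abs_le.mp (hbound i₀ l')
          linarith
        obtain ⟨e, he⟩ := step_perm C S (a i₀) hS hb
        refine ⟨Function.update σ₀ i₀ e, ?_⟩
        intro k hk j j'
        rcases Nat.lt_or_ge k (K + 1) with hkK | hkK
        · -- k ≤ K : sums unchanged
          have hsame : ∀ jj : Fin m,
              (∑ i ∈ Finset.univ.filter (fun i : Fin n => i.val < k),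
                a i (Function.update σ₀ i₀ e i jj))
              = ∑ i ∈ Finset.univ.filter (fun i : Fin n => i.val < k), a i (σ₀ i jj) := by
            intro jj
            refine Finset.sum_congr rfl ?_
            intro i hi
            have hi' : i.val < k := (Finset.mem_filter.mp hi).2
            have hne : i ≠ i₀ := by
              intro hcontr
              have hv := congrArg Fin.val hcontr
              rw [hi₀val] at hv
              omega
            rw [Function.update_of_ne hne]
          rw [hsame j, hsame j']
          exact hσ₀ k (by omega) j j'
        · -- k = K + 1
          have hkeq : k = K + 1 := le_antisymm hk hkK
          subst hkeq
          have hfilter : (Finset.univ.filter (fun i : Fin n => i.val < K + 1))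
              = insert i₀ (Finset.univ.filter (fun i : Fin n => i.val < K)) := by
            ext i
            simp only [Finset.mem_filter, Finset.mem_univ, true_and, Finset.mem_insert]
            constructor
            · intro hiK
              rcases Nat.lt_or_ge i.val K with h | h
              · exact Or.inr h
              · refine Or.inl (Fin.ext ?_)
                rw [hi₀val]
                omega
            · intro hcase
              rcases hcase with h | h
              · have hv := congrArg Fin.val h
                rw [hi₀val] at hv
                omega
              · omega
          have hnotmem : i₀ ∉ Finset.univ.filter (fun i : Fin n => i.val < K) := by
            simp only [Finset.mem_filter, Finset.mem_univ, true_and, hi₀val]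
            omega
          have hsplit : ∀ jj : Fin m,
              (∑ i ∈ Finset.univ.filter (fun i : Fin n => i.val < K + 1),
                a i (Function.update σ₀ i₀ e i jj))
              = S jj + a i₀ (e jj) := by
            intro jj
            rw [hfilter, Finset.sum_insert hnotmem, Function.update_self]
            have hrest : (∑ i ∈ Finset.univ.filter (fun i : Fin n => i.val < K),
                a i (Function.update σ₀ i₀ e i jj))
                = ∑ i ∈ Finset.univ.filter (fun i : Fin n => i.val < K), a i (σ₀ i jj) := by
              refine Finset.sum_congr rfl ?_
              intro i hi
              have hi' : i.val < K := (Finset.mem_filter.mp hi).2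
              have hne : i ≠ i₀ := by
                intro hcontr
                have hv := congrArg Fin.val hcontr
                rw [hi₀val] at hv
                omega
              rw [Function.update_of_ne hne]
            rw [hrest, hSdef]
            ring
          rw [hsplit j, hsplit j']
          exact he j j'
      · -- K ≥ n : nothing changes
        refine ⟨σ₀, ?_⟩
        intro k hk j j'
        rcases Nat.lt_or_ge k (K + 1) with hkK | hkK
        · exact hσ₀ k (by omega) j j'
        · have hkeq : k = K + 1 := le_antisymm hk hkK
          subst hkeq
          have hfilter : (Finset.univ.filter (fun i : Fin n => i.val < K + 1))
              = Finset.univ.filter (fun i : Fin n => i.val < K) := by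
            ext i
            simp only [Finset.mem_filter, Finset.mem_univ, true_and]
            have := i.isLt
            omega
          rw [hfilter]
          exact hσ₀ K le_rfl j j'
  obtain ⟨σ, hσ⟩ := key n
  refine ⟨σ, ?_⟩
  intro k j
  have hIic : (Finset.Iic k) = Finset.univ.filter (fun i : Fin n => i.val < k.val + 1) := by
    ext i
    simp only [Finset.mem_Iic, Finset.mem_filter, Finset.mem_univ, true_and]
    rw [Fin.le_def]
    omega
  have hdiff : ∀ j₁ j₂ : Fin m,
      (∑ i ∈ Finset.Iic k, a i ((σ i) j₁)) - (∑ i ∈ Finset.Iic k, a i ((σ i) j₂)) ≤ 2 * C := by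
    intro j₁ j₂
    rw [hIic]
    exact hσ (k.val + 1) (by omega) j₁ j₂
  have hzero : ∑ jj : Fin m, (∑ i ∈ Finset.Iic k, a i ((σ i) jj)) = 0 := by
    rw [Finset.sum_comm]
    calc ∑ i ∈ Finset.Iic k, ∑ jj : Fin m, a i ((σ i) jj)
        = ∑ i ∈ Finset.Iic k, (0 : ℝ) := by
          refine Finset.sum_congr rfl ?_
          intro i _
          rw [Equiv.sum_comp (σ i) (a i)]
          exact hrow i
      _ = 0 := Finset.sum_const_zero
  have hmpos : (0 : ℝ) < m := by exact_mod_cast j.pos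
  rw [abs_le]
  constructor
  · -- -2C ≤ sum
    have h2 : ∑ jj : Fin m,
        ((∑ i ∈ Finset.Iic k, a i ((σ i) jj)) - (∑ i ∈ Finset.Iic k, a i ((σ i) j)))
        ≤ (m : ℝ) * (2 * C) := by
      calc ∑ jj : Fin m,
          ((∑ i ∈ Finset.Iic k, a i ((σ i) jj)) - (∑ i ∈ Finset.Iic k, a i ((σ i) j)))
          ≤ ∑ _jj : Fin m, (2 * C) := Finset.sum_le_sum (fun jj _ => hdiff jj j)
        _ = (m : ℝ) * (2 * C) := by
            rw [Finset.sum_const, Finset.card_univ, Fintype.card_fin, nsmul_eq_mul]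
    have h1 : ∑ jj : Fin m,
        ((∑ i ∈ Finset.Iic k, a i ((σ i) jj)) - (∑ i ∈ Finset.Iic k, a i ((σ i) j)))
        = (m : ℝ) * (-(∑ i ∈ Finset.Iic k, a i ((σ i) j))) := by
      rw [Finset.sum_sub_distrib, hzero, Finset.sum_const, Finset.card_univ,
        Fintype.card_fin, nsmul_eq_mul]
      ring
    rw [h1] at h2
    nlinarith
  · -- sum ≤ 2C
    have h2 : ∑ jj : Fin m,
        ((∑ i ∈ Finset.Iic k, a i ((σ i) j)) - (∑ i ∈ Finset.Iic k, a i ((σ i) jj)))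
        ≤ (m : ℝ) * (2 * C) := by
      calc ∑ jj : Fin m,
          ((∑ i ∈ Finset.Iic k, a i ((σ i) j)) - (∑ i ∈ Finset.Iic k, a i ((σ i) jj)))
          ≤ ∑ _jj : Fin m, (2 * C) := Finset.sum_le_sum (fun jj _ => hdiff j jj)
        _ = (m : ℝ) * (2 * C) := by
            rw [Finset.sum_const, Finset.card_univ, Fintype.card_fin, nsmul_eq_mul]
    have h1 : ∑ jj : Fin m,
        ((∑ i ∈ Finset.Iic k, a i ((σ i) j)) - (∑ i ∈ Finset.Iic k, a i ((σ i) jj)))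
        = (m : ℝ) * (∑ i ∈ Finset.Iic k, a i ((σ i) j)) := by
      rw [Finset.sum_sub_distrib, hzero, Finset.sum_const, Finset.card_univ,
        Fintype.card_fin, nsmul_eq_mul]
      ring
    rw [h1] at h2
    nlinarith
end

section
/- Let $\alpha \in (0,1)$ be irrational and let $f = (1-\alpha)\chi_{[0,\alpha)} - \alpha\chi_{(\alpha,1]}$. Then there is no compact set $A \subseteq [0,1]$ with $\lambda(A) > 0$, $\int_A f\,d\lambda = 0$, and $f|_A$ continuous, together with a homeomorphism $\varphi : A \to \{0,1\}^{\mathbb{N}}$ mapping the normalized Lebesgue measure $\lambda/\lambda(A)$ on $A$ to the Cantor measure $\mu$. -/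
open MeasureTheory Set

lemma cyl_open (N : ℕ) (z : ℕ → Bool) : IsOpen {y : ℕ → Bool | ∀ i < N, y i = z i} := by
  have : {y : ℕ → Bool | ∀ i < N, y i = z i}
      = ⋂ i ∈ Finset.range N, (fun y : ℕ → Bool => y i) ⁻¹' {z i} := by
    ext y; simp only [Set.mem_setOf_eq, Set.mem_iInter, Finset.mem_range, Set.mem_preimage, Set.mem_singleton_iff]
  rw [this]
  exact isOpen_biInter_finset fun i _ =>
    (isOpen_discrete _).preimage (continuous_apply i)

lemma clopen_dep (C : Set (ℕ → Bool)) (hC : IsClopen C) :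
    ∃ N, ∀ x ∈ C, ∀ y : ℕ → Bool, (∀ i < N, y i = x i) → y ∈ C := by
  have h1 : ∀ x ∈ C, ∃ n : ℕ, {y : ℕ → Bool | ∀ i < n, y i = x i} ⊆ C := by
    intro x hx
    obtain ⟨I, u, hu, hsub⟩ := isOpen_pi_iff.mp hC.isOpen x hx
    refine ⟨(I.sup id) + 1, fun y hy => hsub ?_⟩
    intro i hi
    have hyx : y i = x i := hy i (Nat.lt_succ_of_le (Finset.le_sup (f := id) hi))
    rw [hyx]; exact (hu i hi).2
  choose n hn using h1
  obtain ⟨t, ht⟩ := hC.isClosed.isCompact.elim_nhds_subcover'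
    (fun x hx => {y : ℕ → Bool | ∀ i < n x hx, y i = x i})
    (fun x hx => (cyl_open _ x).mem_nhds (fun i _ => rfl))
  refine ⟨t.sup (fun x : ↥C => n x x.2), fun x hx y hy => ?_⟩
  obtain ⟨z, hz, hxz⟩ := Set.mem_iUnion₂.mp (ht hx)
  refine hn z z.2 ?_
  intro i hi
  have hiN : i < t.sup (fun x : ↥C => n x x.2) :=
    lt_of_lt_of_le hi (Finset.le_sup (f := fun x : ↥C => n x x.2) hz)
  rw [hy i hiN]
  exact hxz i hi

lemma measure_clopen (μ : Measure (ℕ → Bool))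
    (hμ : ∀ (n : ℕ) (s : Fin n → Bool),
      μ {x | ∀ i : Fin n, x i = s i} = (1 / 2 : ENNReal) ^ n)
    (C : Set (ℕ → Bool)) (hC : IsClopen C) :
    ∃ (N k : ℕ), μ C = k * (1 / 2 : ENNReal) ^ N := by
  classical
  obtain ⟨N, hN⟩ := clopen_dep C hC
  set ext : (Fin N → Bool) → (ℕ → Bool) :=
    fun s i => if h : i < N then s ⟨i, h⟩ else false with hext
  set S : Finset (Fin N → Bool) := Finset.univ.filter (fun s => ext s ∈ C) with hS
  have hCU : C = ⋃ s ∈ S, {x : ℕ → Bool | ∀ i : Fin N, x i = s i} := by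
    ext x
    simp only [Set.mem_iUnion, hS, Finset.mem_filter, Finset.mem_univ, true_and,
      Set.mem_setOf_eq, exists_prop]
    constructor
    · intro hx
      refine ⟨fun i => x i, hN x hx _ ?_, fun i => rfl⟩
      intro i hi
      simp [hext, hi]
    · rintro ⟨s, hs, hxs⟩
      refine hN (ext s) hs x ?_
      intro i hi
      simp [hext, hi, hxs ⟨i, hi⟩]
  have hmeas : ∀ s : Fin N → Bool, MeasurableSet {x : ℕ → Bool | ∀ i : Fin N, x i = s i} := by
    intro s
    have : {x : ℕ → Bool | ∀ i : Fin N, x i = s i}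
        = ⋂ i : Fin N, (fun x : ℕ → Bool => x i) ⁻¹' {s i} := by
      ext x; simp
    rw [this]
    exact MeasurableSet.iInter fun i => (measurable_pi_apply _) (measurableSet_singleton _)
  have hdisj : (↑S : Set (Fin N → Bool)).PairwiseDisjoint
      (fun s => {x : ℕ → Bool | ∀ i : Fin N, x i = s i}) := by
    intro s _ t _ hst
    refine Set.disjoint_left.mpr ?_
    intro x hxs hxt
    exact hst (funext fun i => (hxs i).symm.trans (hxt i))
  refine ⟨N, S.card, ?_⟩
  rw [hCU, measure_biUnion_finset hdisj (fun s _ => hmeas s)]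
  simp [hμ N, Finset.sum_const, nsmul_eq_mul]

theorem stmt3 (α : ℝ) (hα : α ∈ Set.Ioo (0:ℝ) 1) (hirr : Irrational α)
    (f : ℝ → ℝ)
    (hf : f = fun x => (1 - α) * Set.indicator (Set.Ico (0:ℝ) α) (fun _ => (1:ℝ)) x
      - α * Set.indicator (Set.Ioc α 1) (fun _ => (1:ℝ)) x)
    (μ : Measure (ℕ → Bool)) [IsProbabilityMeasure μ]
    (hμ : ∀ (n : ℕ) (s : Fin n → Bool),
      μ {x | ∀ i : Fin n, x i = s i} = (1 / 2 : ENNReal) ^ n) :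
    ¬ ∃ (A : Set ℝ) (e : A ≃ₜ (ℕ → Bool)),
        IsCompact A ∧ A ⊆ Set.Icc 0 1 ∧ 0 < volume A ∧
        (∫ x in A, f x) = 0 ∧ ContinuousOn f A ∧
        (∀ B : Set A, MeasurableSet B →
          μ (e '' B) = volume (Subtype.val '' B) / volume A) := by
  rintro ⟨A, e, hAc, hAsub, hApos, hint, hfc, hmap⟩
  obtain ⟨hα0, hα1⟩ := hα
  have hAm : MeasurableSet A := hAc.isClosed.measurableSet
  have hAfin : volume A ≠ ⊤ := by
    refine (lt_of_le_of_lt (measure_mono hAsub) ?_).ne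
    rw [Real.volume_Icc]; exact ENNReal.ofReal_lt_top
  -- values of f
  have hfval : ∀ x ∈ Set.Icc (0:ℝ) 1,
      (x < α → f x = 1 - α) ∧ (x = α → f x = 0) ∧ (α < x → f x = -α) := by
    intro x hx
    refine ⟨fun h => ?_, fun h => ?_, fun h => ?_⟩ <;>
      simp only [hf, Set.indicator_apply, Set.mem_Ico, Set.mem_Ioc]
    · rw [if_pos ⟨hx.1, h⟩, if_neg (by intro hh; linarith [hh.1])]; ring
    · rw [if_neg (by intro hh; exact absurd hh.2 (by simp [h])),
        if_neg (by intro hh; simp [h] at hh)]; ring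
    · rw [if_neg (by intro hh; linarith [hh.2]), if_pos ⟨h, hx.2⟩]; ring
  set g : A → ℝ := A.restrict f with hg
  have hgc : Continuous g := continuousOn_iff_continuous_restrict.mp hfc
  set B : Set A := g ⁻¹' (Set.Ioi 0) with hB
  have hBval : ∀ x : A, x ∈ B ↔ (x : ℝ) < α := by
    intro x
    have hx := hfval x (hAsub x.2)
    constructor
    · intro hxB
      by_contra hge
      push_neg at hge
      rcases eq_or_lt_of_le hge with h | h
      · have h0 := hx.2.1 h.symm
        have : g x > 0 := hxB
        rw [hg, show A.restrict f x = f x from rfl, h0] at this; linarith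
      · have h0 := hx.2.2 h
        have : g x > 0 := hxB
        rw [hg, show A.restrict f x = f x from rfl, h0] at this; linarith
    · intro hlt
      have h0 := hx.1 hlt
      show g x ∈ Set.Ioi (0:ℝ)
      rw [hg, show A.restrict f x = f x from rfl, h0]; exact by simp; linarith
  have hBclosed : IsClosed B := by
    have heq : B = g ⁻¹' (Set.Ici (1 - α)) := by
      ext x
      have hx := hfval x (hAsub x.2)
      simp only [hB, Set.mem_preimage, Set.mem_Ioi, Set.mem_Ici]
      rcases lt_trichotomy (x : ℝ) α with h | h | h
      · rw [hg, show A.restrict f x = f x from rfl, hx.1 h]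
        constructor <;> intro <;> linarith
      · rw [hg, show A.restrict f x = f x from rfl, hx.2.1 h]
        constructor <;> intro <;> linarith
      · rw [hg, show A.restrict f x = f x from rfl, hx.2.2 h]
        constructor <;> intro <;> linarith
    rw [heq]; exact isClosed_Ici.preimage hgc
  have hBclopen : IsClopen B := ⟨hBclosed, isOpen_Ioi.preimage hgc⟩
  have heB : IsClopen (e '' B) := by
    have himg : (e '' B) = e.symm ⁻¹' B := by
      ext y
      constructor
      · rintro ⟨a, ha, rfl⟩
        simpa [e.symm_apply_apply] using ha
      · intro hy
        exact ⟨e.symm y, hy, e.apply_symm_apply y⟩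
    rw [himg]
    exact ⟨hBclopen.1.preimage e.symm.continuous, hBclopen.2.preimage e.symm.continuous⟩
  obtain ⟨N, k, hμC⟩ := measure_clopen μ hμ _ heB
  have hBmeas : MeasurableSet B := hBclopen.2.measurableSet
  have hmapB := hmap B hBmeas
  have hvalB : (Subtype.val '' B : Set ℝ) = A ∩ Set.Iio α := by
    ext x
    constructor
    · rintro ⟨y, hy, rfl⟩
      exact ⟨y.2, (hBval y).mp hy⟩
    · rintro ⟨hxA, hxlt⟩
      exact ⟨⟨x, hxA⟩, (hBval ⟨x, hxA⟩).mpr hxlt, rfl⟩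
  set u := volume (A ∩ Set.Iio α) with hu
  set v := volume (A ∩ Set.Ioc α 1) with hv
  set t := volume A with ht
  have hufin : u ≠ ⊤ := (lt_of_le_of_lt (measure_mono Set.inter_subset_left) hAfin.lt_top).ne
  have hvfin : v ≠ ⊤ := (lt_of_le_of_lt (measure_mono Set.inter_subset_left) hAfin.lt_top).ne
  have huv : u + v = t := by
    have h1 : u + volume (A \ Set.Iio α) = t := by
      rw [hu, ht]
      exact measure_inter_add_diff A measurableSet_Iio
    have h2 : volume (A \ Set.Iio α) = v := by
      apply le_antisymm
      · have hsub2 : A \ Set.Iio α ⊆ {α} ∪ (A ∩ Set.Ioc α 1) := by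
          rintro x ⟨hxA, hxni⟩
          simp only [Set.mem_Iio, not_lt] at hxni
          rcases eq_or_lt_of_le hxni with h | h
          · exact Or.inl h.symm
          · exact Or.inr ⟨hxA, h, (hAsub hxA).2⟩
        calc volume (A \ Set.Iio α) ≤ volume ({α} ∪ (A ∩ Set.Ioc α 1)) := measure_mono hsub2
          _ ≤ volume {α} + v := measure_union_le _ _
          _ = v := by simp
      · apply measure_mono
        rintro x ⟨hxA, hxI⟩
        exact ⟨hxA, by simp only [Set.mem_Iio, not_lt]; exact hxI.1.le⟩
    rw [← h2]; exact h1
  -- integral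
  haveI : IsFiniteMeasure (volume.restrict A) :=
    ⟨by rw [Measure.restrict_apply_univ]; exact hAfin.lt_top⟩
  have hi1 : MeasurableSet (Set.Ico (0:ℝ) α) := measurableSet_Ico
  have hi2 : MeasurableSet (Set.Ioc α (1:ℝ)) := measurableSet_Ioc
  have hintg1 : Integrable ((Set.Ico (0:ℝ) α).indicator (fun _ => (1:ℝ))) (volume.restrict A) :=
    (integrable_const (1:ℝ)).indicator hi1
  have hintg2 : Integrable ((Set.Ioc α (1:ℝ)).indicator (fun _ => (1:ℝ))) (volume.restrict A) :=
    (integrable_const (1:ℝ)).indicator hi2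
  have hIcoIio : Set.Ico (0:ℝ) α ∩ A = A ∩ Set.Iio α := by
    ext x
    constructor
    · rintro ⟨⟨_, hxa⟩, hxA⟩; exact ⟨hxA, hxa⟩
    · rintro ⟨hxA, hxa⟩; exact ⟨⟨(hAsub hxA).1, hxa⟩, hxA⟩
  have hint' : (1 - α) * u.toReal - α * v.toReal = 0 := by
    rw [hf] at hint
    rw [integral_sub (hintg1.const_mul _) (hintg2.const_mul _),
      integral_const_mul, integral_const_mul,
      integral_indicator_const _ hi1, integral_indicator_const _ hi2,
      measureReal_restrict_apply hi1, measureReal_restrict_apply hi2,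
      hIcoIio, Set.inter_comm (Ioc α 1) A] at hint
    simpa [measureReal_def] using hint
  have htR : 0 < t.toReal := ENNReal.toReal_pos hApos.ne' hAfin
  have huvR : u.toReal + v.toReal = t.toReal := by
    rw [← huv, ENNReal.toReal_add hufin hvfin]
  have hu_eq : u.toReal = α * t.toReal := by nlinarith [hint', huvR]
  have hdiv : u / t = (k : ENNReal) * (1 / 2) ^ N := by
    rw [hu, ← hvalB, ← hmapB, hμC]
  have hdivR : u.toReal / t.toReal = (k : ℝ) * (1 / 2) ^ N := by
    have h := congrArg ENNReal.toReal hdiv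
    rw [ENNReal.toReal_div] at h
    rw [h]
    simp [ENNReal.toReal_mul, ENNReal.toReal_pow, ENNReal.toReal_div]
  have hαeq : α = (k : ℝ) * (1 / 2) ^ N := by
    rw [← hdivR, hu_eq, mul_div_assoc, div_self htR.ne', mul_one]
  exact hirr ⟨(k : ℚ) * (1 / 2) ^ N, by push_cast; exact hαeq.symm⟩
end

section
/- Let $D \subseteq [0,1]$ be measurable and $f \in L_\infty(D)$ real-valued with $f \neq 0$ and $\int_D f\,d\lambda = 0$. Set $\tau^\pm = \lambda(\{\pm f > \frac{1}{2}\|f^\pm\|_\infty\})$ and let $0 < \epsilon < \frac{1}{4}\min\{\tau^+ \|f^+\|_\infty/\|f\|_\infty,\ \tau^- \|f^-\|_\infty/\|f\|_\infty\}$. Then for any compact subset $E \subseteq D$ with $\lambda(E) \geq \lambda(D) - \epsilon$ on which $f$ is continuous, there exists a compact subset $K \subseteq E$ with $\int_K f\,d\lambda = 0$ and $\lambda(K) \geq \lambda(D) - (1 + 2\|f\|_\infty \max\{1/\|f^+\|_\infty, 1/\|f^-\|_\infty\})\epsilon$. -/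
open MeasureTheory Set

lemma key5 (E : Set ℝ) (hE : IsCompact E) (hE1 : E ⊆ Set.Icc 0 1)
    (f : ℝ → ℝ) (hcont : ContinuousOn f E) (hint : IntegrableOn f E)
    (b : ℝ) (hb : 0 < b)
    (hI0 : 0 ≤ ∫ x in E, f x)
    (hI1 : ∫ x in E, f x ≤ b * (volume (E ∩ {x | b < f x})).toReal) :
    ∃ K : Set ℝ, IsCompact K ∧ K ⊆ E ∧ (∫ x in K, f x) = 0 ∧
      (volume E).toReal - (∫ x in E, f x) / b ≤ (volume K).toReal := by
  obtain ⟨V, hV, hVE⟩ := continuousOn_iff'.1 hcont (Set.Ioi b) isOpen_Ioi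
  set S : Set ℝ := f ⁻¹' (Set.Ioi b) ∩ E with hS
  have hSVE : S = V ∩ E := hVE
  have hSmeas : MeasurableSet S := by
    rw [hSVE]; exact hV.measurableSet.inter hE.measurableSet
  have hSsub : S ⊆ E := Set.inter_subset_right
  have hSE : E ∩ {x | b < f x} = S := by
    ext x; simp [hS, Set.mem_preimage, Set.mem_Ioi, and_comm]
  -- bound on f on E
  obtain ⟨M, hM⟩ := hE.exists_bound_of_continuousOn hcont
  set M' : ℝ := max M 0 with hM'
  have hM'0 : 0 ≤ M' := le_max_right _ _
  have hMb : ∀ x ∈ E, ‖f x‖ ≤ M' := fun x hx => (hM x hx).trans (le_max_left _ _)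
  -- finite measures
  have hfinE : volume E < ⊤ := lt_of_le_of_lt (measure_mono hE1) (by simp)
  have hintS : ∀ t : ℝ, IntegrableOn f (S ∩ Set.Iio t) :=
    fun t => hint.mono_set ((Set.inter_subset_left).trans hSsub)
  set g : ℝ → ℝ := fun t => ∫ x in S ∩ Set.Iio t, f x with hg
  have hgdiff : ∀ s t : ℝ, s ≤ t → g t - g s = ∫ x in S ∩ Set.Ico s t, f x := by
    intro s t hst
    have hsplit : S ∩ Set.Iio t = (S ∩ Set.Iio s) ∪ (S ∩ Set.Ico s t) := by
      rw [← Set.inter_union_distrib_left]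
      congr 1
      ext x; simp only [Set.mem_Iio, Set.mem_union, Set.mem_Ico]
      constructor
      · intro h; by_cases hxs : x < s
        · exact Or.inl hxs
        · exact Or.inr ⟨le_of_not_gt hxs, h⟩
      · rintro (h | ⟨_, h⟩) <;> [exact lt_of_lt_of_le h hst; exact h]
    have hdisj : Disjoint (S ∩ Set.Iio s) (S ∩ Set.Ico s t) := by
      apply Set.disjoint_left.2
      rintro x ⟨_, hx1⟩ ⟨_, hx2, _⟩
      exact absurd hx2 (not_le.2 hx1)
    rw [hg]
    simp only
    rw [hsplit, setIntegral_union hdisj (hSmeas.inter measurableSet_Ico)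
      (hintS s) (hint.mono_set ((Set.inter_subset_left).trans hSsub))]
    ring
  have hgbound : ∀ s t : ℝ, s ≤ t → |g t - g s| ≤ M' * (t - s) := by
    intro s t hst
    rw [hgdiff s t hst]
    have h1 : volume (S ∩ Set.Ico s t) < ⊤ :=
      lt_of_le_of_lt (measure_mono ((Set.inter_subset_left).trans (hSsub.trans hE1))) (by simp)
    have := norm_setIntegral_le_of_norm_le_const h1
      (fun x hx => hMb x (hSsub hx.1))
    refine this.trans ?_
    apply mul_le_mul_of_nonneg_left _ hM'0
    have h2 : volume (S ∩ Set.Ico s t) ≤ ENNReal.ofReal (t - s) := by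
      refine (measure_mono Set.inter_subset_right).trans ?_
      rw [Real.volume_Ico]
    calc (volume (S ∩ Set.Ico s t)).toReal ≤ (ENNReal.ofReal (t - s)).toReal :=
          ENNReal.toReal_mono (by simp) h2
      _ ≤ t - s := by rw [ENNReal.toReal_ofReal (by linarith)]
  have hgcont : Continuous g := by
    apply LipschitzWith.continuous (K := Real.toNNReal M')
    apply LipschitzWith.of_dist_le_mul
    intro s t
    rw [Real.dist_eq, Real.dist_eq, Real.coe_toNNReal M' hM'0]
    rcases le_total s t with h | h
    · rw [abs_sub_comm (g s), abs_sub_comm s]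
      calc |g t - g s| ≤ M' * (t - s) := hgbound s t h
        _ ≤ M' * |t - s| := mul_le_mul_of_nonneg_left (le_abs_self _) hM'0
    · calc |g s - g t| ≤ M' * (s - t) := hgbound t s h
        _ ≤ M' * |s - t| := mul_le_mul_of_nonneg_left (le_abs_self _) hM'0
  have hg0 : g 0 = 0 := by
    have : S ∩ Set.Iio 0 = ∅ := by
      apply Set.eq_empty_of_forall_notMem
      rintro x ⟨hx1, hx2⟩
      exact absurd (hE1 (hSsub hx1)).1 (not_le.2 hx2)
    simp [hg, this]
  have hg2 : ∫ x in E, f x ≤ g 2 := by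
    have hS2 : S ∩ Set.Iio 2 = S := by
      apply Set.inter_eq_left.2
      intro x hx
      exact lt_of_le_of_lt (hE1 (hSsub hx)).2 (by norm_num)
    have hfinS : volume S < ⊤ :=
      lt_of_le_of_lt (measure_mono (hSsub.trans hE1)) (by simp)
    have hmono : b * (volume S).toReal ≤ ∫ x in S, f x := by
      have := setIntegral_mono_on (integrableOn_const hfinS.ne)
        (hint.mono_set hSsub) hSmeas (fun x hx => le_of_lt hx.1)
      simpa [setIntegral_const, smul_eq_mul, mul_comm, Measure.real] using this
    rw [hg]; simp only [hS2]
    calc ∫ x in E, f x ≤ b * (volume S).toReal := by rwa [hSE] at hI1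
      _ ≤ ∫ x in S, f x := hmono
  -- IVT
  have hmem : (∫ x in E, f x) ∈ Set.Icc (g 0) (g 2) := by
    rw [hg0]; exact ⟨hI0, hg2⟩
  obtain ⟨t, _, hgt⟩ := intermediate_value_Icc (by norm_num : (0:ℝ) ≤ 2)
    hgcont.continuousOn hmem
  -- the compact set
  refine ⟨E \ (V ∩ Set.Iio t), hE.diff (hV.inter isOpen_Iio), Set.diff_subset, ?_, ?_⟩
  all_goals {
    have hRem : S ∩ Set.Iio t = E ∩ (V ∩ Set.Iio t) := by
      rw [hSVE]; ext x
      simp only [Set.mem_inter_iff, Set.mem_Iio]; tauto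
    have hsplit : E = (E \ (V ∩ Set.Iio t)) ∪ (S ∩ Set.Iio t) := by
      rw [hRem, Set.diff_union_inter]
    have hdisj : Disjoint (E \ (V ∩ Set.Iio t)) (S ∩ Set.Iio t) := by
      rw [hRem]
      exact Set.disjoint_of_subset_right Set.inter_subset_right disjoint_sdiff_left
    have hSmeast : MeasurableSet (S ∩ Set.Iio t) := hSmeas.inter measurableSet_Iio
    have hKint : IntegrableOn f (E \ (V ∩ Set.Iio t)) := hint.mono_set Set.diff_subset
    have hEq : ∫ x in E, f x = (∫ x in E \ (V ∩ Set.Iio t), f x) + g t := by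
      rw [hg]
      conv_lhs => rw [hsplit]
      exact setIntegral_union hdisj hSmeast hKint (hintS t)
    first
    | -- integral goal
      (rw [hgt] at hEq; linarith)
    | -- measure goal
      ( have hmeasadd : volume E =
          volume (E \ (V ∩ Set.Iio t)) + volume (S ∩ Set.Iio t) := by
          conv_lhs => rw [hsplit]
          exact measure_union hdisj hSmeast
        have hfinK : volume (E \ (V ∩ Set.Iio t)) < ⊤ :=
          lt_of_le_of_lt (measure_mono Set.diff_subset) hfinE
        have hfinSt : volume (S ∩ Set.Iio t) < ⊤ :=
          lt_of_le_of_lt (measure_mono ((Set.inter_subset_left).trans hSsub)) hfinE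
        have htoReal : (volume E).toReal =
            (volume (E \ (V ∩ Set.Iio t))).toReal + (volume (S ∩ Set.Iio t)).toReal := by
          rw [hmeasadd, ENNReal.toReal_add hfinK.ne hfinSt.ne]
        have hremb : b * (volume (S ∩ Set.Iio t)).toReal ≤ g t := by
          have := setIntegral_mono_on (integrableOn_const hfinSt.ne)
            (hintS t) hSmeast (fun x hx => le_of_lt hx.1.1)
          simpa [setIntegral_const, smul_eq_mul, mul_comm, Measure.real] using this
        rw [hgt] at hremb
        have : (volume (S ∩ Set.Iio t)).toReal ≤ (∫ x in E, f x) / b := by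
          rw [le_div_iff₀ hb]; linarith [hremb]
        linarith ) }

open MeasureTheory Set

set_option maxHeartbeats 2000000 in
theorem stmt5 (D : Set ℝ) (hD : MeasurableSet D) (hD1 : D ⊆ Set.Icc 0 1)
    (f : ℝ → ℝ) (hf : MemLp f ⊤ (volume.restrict D))
    (hne : ¬ f =ᵐ[volume.restrict D] 0) (hmean : ∫ x in D, f x = 0)
    (nf np nm τp τm : ℝ)
    (hnf : nf = (eLpNorm f ⊤ (volume.restrict D)).toReal)
    (hnp : np = (eLpNorm (fun y => max (f y) 0) ⊤ (volume.restrict D)).toReal)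
    (hnm : nm = (eLpNorm (fun y => max (-f y) 0) ⊤ (volume.restrict D)).toReal)
    (hτp : τp = ((volume.restrict D) {x | np / 2 < f x}).toReal)
    (hτm : τm = ((volume.restrict D) {x | f x < -(nm / 2)}).toReal)
    (ε : ℝ) (hε : 0 < ε)
    (hε2 : ε < min (τp * np / nf) (τm * nm / nf) / 4)
    (E : Set ℝ) (hE : IsCompact E) (hED : E ⊆ D)
    (hEmeas : (volume D).toReal - ε ≤ (volume E).toReal)
    (hcont : ContinuousOn f E) :
    ∃ K : Set ℝ, IsCompact K ∧ K ⊆ E ∧ (∫ x in K, f x) = 0 ∧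
      (volume D).toReal - (1 + 2 * nf * max (1 / np) (1 / nm)) * ε ≤ (volume K).toReal := by
  -- finiteness
  have hfinsub : ∀ A : Set ℝ, A ⊆ D → volume A < ⊤ := fun A hA =>
    lt_of_le_of_lt (measure_mono (hA.trans hD1)) (by simp)
  have hfinD : volume D < ⊤ := hfinsub D (subset_refl D)
  have hfinE : volume E < ⊤ := hfinsub E hED
  haveI : IsFiniteMeasure (volume.restrict D) :=
    ⟨by rwa [Measure.restrict_apply_univ]⟩
  -- positivity of constants
  have h4 : 0 < min (τp * np / nf) (τm * nm / nf) := by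
    have := hε.trans hε2; linarith
  have hp' : 0 < τp * np / nf := lt_of_lt_of_le h4 (min_le_left _ _)
  have hm' : 0 < τm * nm / nf := lt_of_lt_of_le h4 (min_le_right _ _)
  have hnf0 : (0:ℝ) ≤ nf := hnf ▸ ENNReal.toReal_nonneg
  have hnfne : nf ≠ 0 := by
    intro h0; rw [h0, div_zero] at hp'; exact lt_irrefl _ hp'
  have hnfpos : 0 < nf := lt_of_le_of_ne hnf0 (Ne.symm hnfne)
  have hτpnp : 0 < τp * np := by
    have h := (div_pos_iff.mp hp')
    rcases h with ⟨h1, _⟩ | ⟨_, h2⟩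
    · exact h1
    · linarith
  have hτmnm : 0 < τm * nm := by
    have h := (div_pos_iff.mp hm')
    rcases h with ⟨h1, _⟩ | ⟨_, h2⟩
    · exact h1
    · linarith
  have hnp0 : (0:ℝ) ≤ np := hnp ▸ ENNReal.toReal_nonneg
  have hnm0 : (0:ℝ) ≤ nm := hnm ▸ ENNReal.toReal_nonneg
  have hτp0 : (0:ℝ) ≤ τp := hτp ▸ ENNReal.toReal_nonneg
  have hτm0 : (0:ℝ) ≤ τm := hτm ▸ ENNReal.toReal_nonneg
  have hnppos : 0 < np := by
    rcases mul_pos_iff.mp hτpnp with ⟨_, h⟩ | ⟨_, h⟩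
    · exact h
    · linarith
  have hnmpos : 0 < nm := by
    rcases mul_pos_iff.mp hτmnm with ⟨_, h⟩ | ⟨_, h⟩
    · exact h
    · linarith
  have hτppos : 0 < τp := by
    rcases mul_pos_iff.mp hτpnp with ⟨h, _⟩ | ⟨h, _⟩
    · exact h
    · linarith
  have hτmpos : 0 < τm := by
    rcases mul_pos_iff.mp hτmnm with ⟨h, _⟩ | ⟨h, _⟩
    · exact h
    · linarith
  -- eLpNorm comparisons
  have hfin : eLpNorm f ⊤ (volume.restrict D) ≠ ⊤ := hf.2.ne
  have hnple : np ≤ nf := by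
    rw [hnp, hnf]
    refine ENNReal.toReal_mono hfin (eLpNorm_mono fun x => ?_)
    rw [Real.norm_eq_abs, Real.norm_eq_abs, abs_of_nonneg (le_max_right (f x) 0)]
    exact max_le (le_abs_self _) (abs_nonneg _)
  have hnmle : nm ≤ nf := by
    rw [hnm, hnf]
    refine ENNReal.toReal_mono hfin (eLpNorm_mono fun x => ?_)
    rw [Real.norm_eq_abs, Real.norm_eq_abs, abs_of_nonneg (le_max_right (-f x) 0)]
    exact max_le (neg_le_abs _) (abs_nonneg _)
  -- a.e. bound
  have haebound : ∀ᵐ x ∂(volume.restrict D), ‖f x‖ ≤ nf := by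
    filter_upwards [ae_le_eLpNormEssSup (f := f) (μ := volume.restrict D)] with x hx
    rw [hnf, eLpNorm_exponent_top]
    have hlt : eLpNormEssSup f (volume.restrict D) ≠ ⊤ := by
      rwa [← eLpNorm_exponent_top]
    calc ‖f x‖ = ((‖f x‖₊ : ENNReal)).toReal := by simp
      _ ≤ _ := ENNReal.toReal_mono hlt hx
  -- integral splitting
  have hEmeasSet : MeasurableSet E := hE.measurableSet
  have hintD : IntegrableOn f D := hf.integrable le_top
  have hintE : IntegrableOn f E := hintD.mono_set hED
  have hsplitint : ∫ x in D, f x = (∫ x in E, f x) + ∫ x in D \ E, f x := by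
    conv_lhs => rw [(Set.union_diff_cancel hED).symm]
    exact setIntegral_union disjoint_sdiff_right (hD.diff hEmeasSet)
      hintE (hintD.mono_set Set.diff_subset)
  have hmdiff : (volume (D \ E)).toReal = (volume D).toReal - (volume E).toReal := by
    rw [measure_diff hED hEmeasSet.nullMeasurableSet hfinE.ne,
      ENNReal.toReal_sub_of_le (measure_mono hED) hfinD.ne]
  have hmdiffε : (volume (D \ E)).toReal ≤ ε := by rw [hmdiff]; linarith
  have haeDE : ∀ᵐ x ∂(volume.restrict (D \ E)), ‖f x‖ ≤ nf :=
    ae_restrict_of_ae_restrict_of_subset Set.diff_subset haebound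
  have hbd : ‖∫ x in D \ E, f x‖ ≤ nf * (volume (D \ E)).toReal :=
    norm_setIntegral_le_of_norm_le_const_ae (hfinsub _ Set.diff_subset) haeDE
  have hIb : |∫ x in E, f x| ≤ nf * ε := by
    rw [Real.norm_eq_abs] at hbd
    have hIneg : ∫ x in E, f x = - ∫ x in D \ E, f x := by linarith
    rw [hIneg, abs_neg]
    calc |∫ x in D \ E, f x| ≤ nf * (volume (D \ E)).toReal := hbd
      _ ≤ nf * ε := mul_le_mul_of_nonneg_left hmdiffε hnf0
  -- lower bound on measure of the level sets inside E
  have hLevel : ∀ P : Set ℝ, ((volume.restrict D) P).toReal - ε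
      ≤ (volume (E ∩ P)).toReal := by
    intro P
    have hres : (volume.restrict D) P = volume (P ∩ D) := Measure.restrict_apply' hD
    have hsub : P ∩ D ⊆ (E ∩ P) ∪ (D \ E) := by
      rintro x ⟨hxP, hxD⟩
      by_cases hxE : x ∈ E
      · exact Or.inl ⟨hxE, hxP⟩
      · exact Or.inr ⟨hxD, hxE⟩
    have h1 : volume (P ∩ D) ≤ volume (E ∩ P) + volume (D \ E) :=
      (measure_mono hsub).trans (measure_union_le _ _)
    have hfin1 : volume (E ∩ P) < ⊤ := hfinsub _ (Set.inter_subset_left.trans hED)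
    have hfin2 : volume (D \ E) < ⊤ := hfinsub _ Set.diff_subset
    have h2 : (volume (P ∩ D)).toReal ≤ (volume (E ∩ P)).toReal + (volume (D \ E)).toReal := by
      rw [← ENNReal.toReal_add hfin1.ne hfin2.ne]
      exact ENNReal.toReal_mono (by simp [hfin1.ne, hfin2.ne, ENNReal.add_ne_top]) h1
    rw [hres]
    linarith
  -- key arithmetic inequalities
  have hε2p : 4 * nf * ε < τp * np := by
    have h1 : ε < τp * np / nf / 4 := lt_of_lt_of_le hε2 (by
      have := min_le_left (τp * np / nf) (τm * nm / nf); linarith)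
    have := (lt_div_iff₀ hnfpos).mp (by linarith : 4 * ε < τp * np / nf)
    linarith
  have hε2m : 4 * nf * ε < τm * nm := by
    have h1 : ε < τm * nm / nf / 4 := lt_of_lt_of_le hε2 (by
      have := min_le_right (τp * np / nf) (τm * nm / nf); linarith)
    have := (lt_div_iff₀ hnfpos).mp (by linarith : 4 * ε < τm * nm / nf)
    linarith
  have hετp : 4 * ε < τp := by
    have hA : 4 * np * ε ≤ 4 * nf * ε := by
      have := mul_le_mul_of_nonneg_right hnple (by linarith : (0:ℝ) ≤ 4 * ε)
      linarith [this]
    by_contra hcon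
    push_neg at hcon
    have hB : τp * np ≤ 4 * ε * np := mul_le_mul_of_nonneg_right hcon hnp0
    nlinarith [hε2p, hA, hB]
  have hετm : 4 * ε < τm := by
    have hA : 4 * nm * ε ≤ 4 * nf * ε := by
      have := mul_le_mul_of_nonneg_right hnmle (by linarith : (0:ℝ) ≤ 4 * ε)
      linarith [this]
    by_contra hcon
    push_neg at hcon
    have hB : τm * nm ≤ 4 * ε * nm := mul_le_mul_of_nonneg_right hcon hnm0
    nlinarith [hε2m, hA, hB]
  set I : ℝ := ∫ x in E, f x with hI
  rcases le_or_gt 0 I with hIpos | hIneg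
  · -- use positive part
    have hIub : I ≤ nf * ε := le_trans (le_abs_self _) hIb
    have hkeyI1 : I ≤ (np / 2) * (volume (E ∩ {x | np / 2 < f x})).toReal := by
      have hL := hLevel {x | np / 2 < f x}
      rw [← hτp] at hL
      calc I ≤ nf * ε := hIub
        _ ≤ (np / 2) * (τp - ε) := by
            have hA : np * (4 * ε) ≤ np * τp := mul_le_mul_of_nonneg_left hετp.le hnp0
            have hB : (np / 2) * (τp - ε) = np * τp / 2 - np * ε / 2 := by ring
            have hC : np * τp = τp * np := by ring
            linarith [hε2p, hA, hB, hC]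
        _ ≤ (np / 2) * (volume (E ∩ {x | np / 2 < f x})).toReal := by
            apply mul_le_mul_of_nonneg_left hL (by linarith)
    obtain ⟨K, hK1, hK2, hK3, hK4⟩ := key5 E hE (hED.trans hD1) f hcont hintE
      (np / 2) (by linarith) hIpos hkeyI1
    refine ⟨K, hK1, hK2, hK3, ?_⟩
    have hmax : 1 / np ≤ max (1 / np) (1 / nm) := le_max_left _ _
    have hdiv : I / (np / 2) ≤ 2 * nf * max (1 / np) (1 / nm) * ε := by
      have h1 : I / (np / 2) = 2 * I * (1 / np) := by
        rw [div_div_eq_mul_div, div_eq_mul_one_div]; ring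
      rw [h1]
      calc 2 * I * (1 / np) ≤ 2 * (nf * ε) * (1 / np) := by
            apply mul_le_mul_of_nonneg_right (by linarith) (by positivity)
        _ = 2 * nf * (1 / np) * ε := by ring
        _ ≤ 2 * nf * max (1 / np) (1 / nm) * ε := by
            apply mul_le_mul_of_nonneg_right _ (le_of_lt hε)
            apply mul_le_mul_of_nonneg_left hmax (by linarith)
    have := hK4
    rw [← hI] at this
    linarith
  · -- use negative part, apply key to -f
    have hIub : -I ≤ nf * ε := le_trans (neg_le_abs _) hIb
    have hnegI : ∫ x in E, (fun x => -f x) x = -I := by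
      rw [hI]; exact integral_neg f
    have hsetEq : E ∩ {x | nm / 2 < (fun x => -f x) x} = E ∩ {x | f x < -(nm / 2)} := by
      ext x
      simp only [Set.mem_inter_iff, Set.mem_setOf_eq]
      constructor
      · rintro ⟨h1, h2⟩; exact ⟨h1, by linarith⟩
      · rintro ⟨h1, h2⟩; exact ⟨h1, by linarith⟩
    have hkeyI1 : ∫ x in E, (fun x => -f x) x
        ≤ (nm / 2) * (volume (E ∩ {x | nm / 2 < (fun x => -f x) x})).toReal := by
      rw [hnegI, hsetEq]
      have hL := hLevel {x | f x < -(nm / 2)}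
      rw [← hτm] at hL
      calc -I ≤ nf * ε := hIub
        _ ≤ (nm / 2) * (τm - ε) := by
            have hA : nm * (4 * ε) ≤ nm * τm := mul_le_mul_of_nonneg_left hετm.le hnm0
            have hB : (nm / 2) * (τm - ε) = nm * τm / 2 - nm * ε / 2 := by ring
            have hC : nm * τm = τm * nm := by ring
            linarith [hε2m, hA, hB, hC]
        _ ≤ (nm / 2) * (volume (E ∩ {x | f x < -(nm / 2)})).toReal := by
            apply mul_le_mul_of_nonneg_left hL (by linarith)
    obtain ⟨K, hK1, hK2, hK3, hK4⟩ := key5 E hE (hED.trans hD1) (fun x => -f x)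
      hcont.neg (hintE.neg) (nm / 2) (by linarith)
      (by rw [hnegI]; linarith) hkeyI1
    refine ⟨K, hK1, hK2, ?_, ?_⟩
    · have : ∫ x in K, (fun x => -f x) x = - ∫ x in K, f x := integral_neg f
      rw [this] at hK3
      linarith
    · rw [hnegI] at hK4
      have hmax : 1 / nm ≤ max (1 / np) (1 / nm) := le_max_right _ _
      have hdiv : (-I) / (nm / 2) ≤ 2 * nf * max (1 / np) (1 / nm) * ε := by
        have h1 : (-I) / (nm / 2) = 2 * (-I) * (1 / nm) := by
          rw [div_div_eq_mul_div, div_eq_mul_one_div]; ring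
        rw [h1]
        calc 2 * (-I) * (1 / nm) ≤ 2 * (nf * ε) * (1 / nm) := by
              apply mul_le_mul_of_nonneg_right (by linarith) (by positivity)
          _ = 2 * nf * (1 / nm) * ε := by ring
          _ ≤ 2 * nf * max (1 / np) (1 / nm) * ε := by
              apply mul_le_mul_of_nonneg_right _ (le_of_lt hε)
              apply mul_le_mul_of_nonneg_left hmax (by linarith)
      linarith
end

section
/- Let $K \subseteq [0,1]$ be compact with $\lambda(K) > 0$ and let $f : K \to \mathbb{R}$ be continuous, mean zero, and satisfy: there exists $\kappa \in \mathbb{R}$ with $\lambda(f^{-1}(\{y\})) = 0$ for all $y < \kappa$ and $f = \kappa$ on $\{f \geq \kappa\}$. Then for every $c \in (0, \lambda(K))$ there exists a compact subset $E \subseteq K \cap (\inf K, \sup K)$ with $\lambda(E) = \lambda(K) - c$ and $\int_E f\,d\lambda = 0$. -/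
open MeasureTheory Set

noncomputable def vol (S : Set ℝ) : ℝ := (volume S).toReal

lemma vol_ne_top {S : Set ℝ} (h : S ⊆ Icc 0 1) : volume S ≠ ⊤ := by
  have : volume S ≤ volume (Icc (0:ℝ) 1) := measure_mono h
  simp [Real.volume_Icc] at this
  exact ne_top_of_le_ne_top (by simp) this

lemma vol_nonneg (S : Set ℝ) : 0 ≤ vol S := ENNReal.toReal_nonneg

lemma vol_mono {S T : Set ℝ} (hT : T ⊆ Icc 0 1) (h : S ⊆ T) : vol S ≤ vol T :=
  ENNReal.toReal_mono (vol_ne_top hT) (measure_mono h)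

lemma vol_mono' {S T : Set ℝ} (hT : volume T ≠ ⊤) (h : S ⊆ T) : vol S ≤ vol T :=
  ENNReal.toReal_mono hT (measure_mono h)

lemma vol_union {S T : Set ℝ} (hS : S ⊆ Icc 0 1) (hT : T ⊆ Icc 0 1)
    (hd : Disjoint S T) (hTm : MeasurableSet T) : vol (S ∪ T) = vol S + vol T := by
  unfold vol
  rw [measure_union hd hTm, ENNReal.toReal_add (vol_ne_top hS) (vol_ne_top hT)]

lemma vol_diff {S T : Set ℝ} (hS : S ⊆ Icc 0 1) (h : T ⊆ S) (hTm : MeasurableSet T) :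
    vol (S \ T) = vol S - vol T := by
  unfold vol
  rw [measure_diff h hTm.nullMeasurableSet (vol_ne_top (h.trans hS)),
    ENNReal.toReal_sub_of_le (measure_mono h) (vol_ne_top hS)]

lemma vol_null_inter {S T : Set ℝ} (hS : volume S = 0) : vol (T ∩ S) = 0 := by
  unfold vol
  rw [measure_inter_null_of_null_right _ hS]
  simp

/-- One-sided Lipschitz bound for `v ↦ vol (X ∩ Iic v)`. -/
lemma vol_Iic_le {X : Set ℝ} (hX : X ⊆ Icc 0 1) {a b : ℝ} (hab : a ≤ b) :
    vol (X ∩ Iic b) ≤ vol (X ∩ Iic a) + (b - a) := by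
  have hsub : X ∩ Iic b ⊆ (X ∩ Iic a) ∪ (X ∩ Ioc a b) := by
    intro x hx
    rcases le_or_gt x a with h | h
    · exact Or.inl ⟨hx.1, h⟩
    · exact Or.inr ⟨hx.1, h, hx.2⟩
  have h1 : volume (X ∩ Iic b) ≤ volume (X ∩ Iic a) + volume (X ∩ Ioc a b) :=
    (measure_mono hsub).trans (measure_union_le _ _)
  have h2 : vol (X ∩ Ioc a b) ≤ b - a := by
    have : volume (X ∩ Ioc a b) ≤ ENNReal.ofReal (b - a) := by
      rw [← Real.volume_Ioc]
      exact measure_mono inter_subset_right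
    calc vol (X ∩ Ioc a b) ≤ (ENNReal.ofReal (b - a)).toReal :=
          ENNReal.toReal_mono (by simp) this
      _ ≤ b - a := by rw [ENNReal.toReal_ofReal (by linarith)]
  have hfin1 : volume (X ∩ Iic a) ≠ ⊤ := vol_ne_top (inter_subset_left.trans hX)
  have hfin2 : volume (X ∩ Ioc a b) ≠ ⊤ := vol_ne_top (inter_subset_left.trans hX)
  have := ENNReal.toReal_mono (by rw [ENNReal.add_ne_top]; exact ⟨hfin1, hfin2⟩) h1
  rw [ENNReal.toReal_add hfin1 hfin2] at this
  calc vol (X ∩ Iic b) ≤ vol (X ∩ Iic a) + vol (X ∩ Ioc a b) := this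
    _ ≤ vol (X ∩ Iic a) + (b - a) := by linarith

lemma cont_vol_Iic {X : Set ℝ} (hX : X ⊆ Icc 0 1) :
    Continuous (fun v => vol (X ∩ Iic v)) := by
  have hmono : Monotone (fun v => vol (X ∩ Iic v)) := by
    intro a b hab
    exact vol_mono (inter_subset_left.trans hX) (inter_subset_inter_right _ (Iic_subset_Iic.2 hab))
  rw [Metric.continuous_iff]
  intro v ε hε
  refine ⟨ε, hε, fun a ha => ?_⟩
  rw [Real.dist_eq] at ha
  rw [Real.dist_eq, abs_lt]
  rcases le_total a v with h | h
  · have h1 := vol_Iic_le hX h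
    have h2 := hmono h
    have : |a - v| < ε := ha
    rw [abs_sub_comm, abs_of_nonneg (by linarith)] at this
    constructor <;> linarith
  · have h1 := vol_Iic_le hX h
    have h2 := hmono h
    rw [abs_of_nonneg (by linarith)] at ha
    constructor <;> linarith

/-- Exact-measure spatial slice. -/
lemma sliceIic {X : Set ℝ} (hX : X ⊆ Icc 0 1) {β : ℝ} (h0 : 0 ≤ β) (h1 : β ≤ vol X) :
    ∃ v, vol (X ∩ Iic v) = β := by
  have hc : ContinuousOn (fun v => vol (X ∩ Iic v)) (Icc (-1) 1) := (cont_vol_Iic hX).continuousOn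
  have hlo : vol (X ∩ Iic (-1)) = 0 := by
    have : X ∩ Iic (-1) = ∅ := by
      ext x; simp only [mem_inter_iff, mem_Iic, mem_empty_iff_false, iff_false]
      rintro ⟨hx, hx2⟩; have := (hX hx).1; linarith
    simp [this, vol]
  have hhi : vol (X ∩ Iic 1) = vol X := by
    have : X ∩ Iic 1 = X := by
      apply inter_eq_left.2; intro x hx; exact (hX hx).2
    rw [this]
  have := intermediate_value_Icc (by norm_num : (-1:ℝ) ≤ 1) hc
  rw [hlo, hhi] at this
  obtain ⟨v, _, hv⟩ := this ⟨h0, h1⟩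
  exact ⟨v, hv⟩

lemma setIntegral_le_const {Y : Set ℝ} {f : ℝ → ℝ} {θ : ℝ} (hY : Y ⊆ Icc 0 1)
    (hInt : IntegrableOn f Y volume) (hb : ∀ᵐ x ∂(volume.restrict Y), f x ≤ θ) :
    ∫ x in Y, f x ≤ θ * vol Y := by
  have h1 : ∫ x in Y, f x ≤ ∫ _x in Y, θ := by
    apply integral_mono_ae hInt (integrableOn_const (vol_ne_top hY)) hb
  rw [setIntegral_const] at h1
  rw [smul_eq_mul, mul_comm] at h1
  exact h1

lemma const_le_setIntegral {Y : Set ℝ} {f : ℝ → ℝ} {θ : ℝ} (hY : Y ⊆ Icc 0 1)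
    (hInt : IntegrableOn f Y volume) (hb : ∀ᵐ x ∂(volume.restrict Y), θ ≤ f x) :
    θ * vol Y ≤ ∫ x in Y, f x := by
  have h1 : ∫ _x in Y, θ ≤ ∫ x in Y, f x := by
    apply integral_mono_ae (integrableOn_const (C := θ) (vol_ne_top hY)) hInt hb
  rw [setIntegral_const, smul_eq_mul, mul_comm] at h1
  exact h1

/-- Bathtub principle: a "bottom-type" set minimizes the integral among equal-measure subsets. -/
lemma bathtub_min {L B Y : Set ℝ} {f : ℝ → ℝ} {θ : ℝ}
    (hL1 : L ⊆ Icc 0 1) (hInt : IntegrableOn f L volume)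
    (hBm : MeasurableSet B) (hYm : MeasurableSet Y) (hBL : B ⊆ L) (hYL : Y ⊆ L)
    (hvol : vol B = vol Y)
    (hB : ∀ᵐ x ∂(volume.restrict B), f x ≤ θ)
    (hT : ∀ᵐ x ∂(volume.restrict (L \ B)), θ ≤ f x) :
    ∫ x in B, f x ≤ ∫ x in Y, f x := by
  have hB1 : B ⊆ Icc 0 1 := hBL.trans hL1
  have hY1 : Y ⊆ Icc 0 1 := hYL.trans hL1
  have hIB : IntegrableOn f B volume := hInt.mono_set hBL
  have hIY : IntegrableOn f Y volume := hInt.mono_set hYL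
  -- decompositions
  have hBsplit : ∫ x in B, f x = (∫ x in B \ Y, f x) + ∫ x in B ∩ Y, f x := by
    rw [← setIntegral_union disjoint_sdiff_inter (hBm.inter hYm)
      (hIB.mono_set diff_subset) (hIB.mono_set inter_subset_left), diff_union_inter]
  have hYsplit : ∫ x in Y, f x = (∫ x in Y \ B, f x) + ∫ x in Y ∩ B, f x := by
    rw [← setIntegral_union disjoint_sdiff_inter (hYm.inter hBm)
      (hIY.mono_set diff_subset) (hIY.mono_set inter_subset_left), diff_union_inter]
  have hvolBY : vol (B \ Y) = vol (Y \ B) := by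
    have h1 : vol B = vol (B \ Y) + vol (B ∩ Y) := by
      rw [← vol_union (diff_subset.trans hB1) (inter_subset_left.trans hB1)
        disjoint_sdiff_inter (hBm.inter hYm), diff_union_inter]
    have h2 : vol Y = vol (Y \ B) + vol (Y ∩ B) := by
      rw [← vol_union (diff_subset.trans hY1) (inter_subset_left.trans hY1)
        disjoint_sdiff_inter (hYm.inter hBm), diff_union_inter]
    have h3 : vol (B ∩ Y) = vol (Y ∩ B) := by rw [inter_comm]
    rw [h1, h2] at hvol
    linarith
  have hup : ∫ x in B \ Y, f x ≤ θ * vol (B \ Y) :=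
    setIntegral_le_const (diff_subset.trans hB1) (hIB.mono_set diff_subset)
      (ae_restrict_of_ae_restrict_of_subset diff_subset hB)
  have hdown : θ * vol (Y \ B) ≤ ∫ x in Y \ B, f x :=
    const_le_setIntegral (diff_subset.trans hY1) (hIY.mono_set diff_subset)
      (ae_restrict_of_ae_restrict_of_subset (diff_subset_diff_left hYL) hT)
  have hIC : ∫ x in B ∩ Y, f x = ∫ x in Y ∩ B, f x := by rw [inter_comm]
  rw [hBsplit, hYsplit]
  rw [hvolBY] at hup
  linarith

lemma bathtub_max {L T Z : Set ℝ} {f : ℝ → ℝ} {θ : ℝ}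
    (hL1 : L ⊆ Icc 0 1) (hInt : IntegrableOn f L volume)
    (hTm : MeasurableSet T) (hZm : MeasurableSet Z) (hTL : T ⊆ L) (hZL : Z ⊆ L)
    (hvol : vol T = vol Z)
    (hT : ∀ᵐ x ∂(volume.restrict T), θ ≤ f x)
    (hB : ∀ᵐ x ∂(volume.restrict (L \ T)), f x ≤ θ) :
    ∫ x in Z, f x ≤ ∫ x in T, f x := by
  have := bathtub_min (f := fun x => -f x) (θ := -θ) hL1 hInt.neg hTm hZm hTL hZL hvol
    (by filter_upwards [hT] with x hx; linarith)
    (by filter_upwards [hB] with x hx; linarith)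
  simp only [integral_neg] at this
  linarith

/-! ### Machinery for sublevel sets -/

def lowSet (L : Set ℝ) (f : ℝ → ℝ) (κ σ : ℝ) : Set ℝ :=
  (L ∩ f ⁻¹' Iic σ) \ (L ∩ f ⁻¹' {κ})

noncomputable def mh (L : Set ℝ) (f : ℝ → ℝ) (κ σ : ℝ) : ℝ := vol (lowSet L f κ σ)

noncomputable def Hh (L : Set ℝ) (f : ℝ → ℝ) (κ σ : ℝ) : ℝ := ∫ x in lowSet L f κ σ, f x

section Machinery

variable {L : Set ℝ} {f : ℝ → ℝ} {κ : ℝ}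

lemma compact_preimage (hLc : IsCompact L) (hf : ContinuousOn f L) {C : Set ℝ} (hC : IsClosed C) :
    IsCompact (L ∩ f ⁻¹' C) :=
  hLc.of_isClosed_subset (hf.preimage_isClosed_of_isClosed hLc.isClosed hC) inter_subset_left

lemma lowSet_subset (σ : ℝ) : lowSet L f κ σ ⊆ L := diff_subset.trans inter_subset_left

lemma lowSet_meas (hLc : IsCompact L) (hf : ContinuousOn f L) (σ : ℝ) :
    MeasurableSet (lowSet L f κ σ) :=
  ((compact_preimage hLc hf isClosed_Iic).measurableSet).diff
    ((compact_preimage hLc hf isClosed_singleton).measurableSet)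

lemma lowSet_mono {a b : ℝ} (hab : a ≤ b) : lowSet L f κ a ⊆ lowSet L f κ b := by
  intro x hx
  exact ⟨⟨hx.1.1, le_trans hx.1.2 hab⟩, hx.2⟩

lemma mh_mono (hL1 : L ⊆ Icc 0 1) : Monotone (mh L f κ) := by
  intro a b hab
  exact vol_mono ((lowSet_subset b).trans hL1) (lowSet_mono hab)

lemma lowSet_diff_eq {a b : ℝ} :
    lowSet L f κ b \ lowSet L f κ a = (L ∩ f ⁻¹' Ioc a b) \ (L ∩ f ⁻¹' {κ}) := by
  ext x
  simp only [lowSet, mem_diff, mem_inter_iff, mem_preimage, mem_Iic, mem_Ioc, mem_singleton_iff]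
  constructor
  · rintro ⟨⟨⟨hxL, hfb⟩, hne⟩, hna⟩
    have hna' : ¬ (f x ≤ a) := fun h => hna ⟨⟨hxL, h⟩, hne⟩
    exact ⟨⟨hxL, not_le.1 hna', hfb⟩, hne⟩
  · rintro ⟨⟨hxL, hab⟩, hne⟩
    exact ⟨⟨⟨hxL, hab.2⟩, hne⟩, fun h => absurd h.1.2 (not_le.2 hab.1)⟩

lemma vol_lowSet_diff (hLc : IsCompact L) (hL1 : L ⊆ Icc 0 1) (hf : ContinuousOn f L)
    {a b : ℝ} (hab : a ≤ b) :
    vol (lowSet L f κ b \ lowSet L f κ a) = mh L f κ b - mh L f κ a :=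
  vol_diff ((lowSet_subset b).trans hL1) (lowSet_mono hab) (lowSet_meas hLc hf a)

lemma Hh_diff (hLc : IsCompact L) (hL1 : L ⊆ Icc 0 1) (hf : ContinuousOn f L)
    {a b : ℝ} (hab : a ≤ b) :
    Hh L f κ b - Hh L f κ a = ∫ x in (lowSet L f κ b \ lowSet L f κ a), f x := by
  have hI : IntegrableOn f L volume := hf.integrableOn_compact hLc
  have : Hh L f κ b = Hh L f κ a + ∫ x in (lowSet L f κ b \ lowSet L f κ a), f x := by
    unfold Hh
    rw [← setIntegral_union disjoint_sdiff_self_right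
      ((lowSet_meas hLc hf b).diff (lowSet_meas hLc hf a))
      (hI.mono_set (lowSet_subset a))
      (hI.mono_set (diff_subset.trans (lowSet_subset b))),
      union_diff_cancel (lowSet_mono hab)]
  linarith

lemma Hh_lip (hLc : IsCompact L) (hL1 : L ⊆ Icc 0 1) (hf : ContinuousOn f L)
    {M : ℝ} (hM : ∀ x ∈ L, ‖f x‖ ≤ M) {a b : ℝ} (hab : a ≤ b) :
    |Hh L f κ b - Hh L f κ a| ≤ M * (mh L f κ b - mh L f κ a) := by
  rw [Hh_diff hLc hL1 hf hab, ← Real.norm_eq_abs, ← vol_lowSet_diff hLc hL1 hf hab]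
  apply norm_setIntegral_le_of_norm_le_const
  · exact lt_of_le_of_ne le_top (vol_ne_top ((diff_subset.trans ((lowSet_subset b).trans hL1))))
  · intro x hx
    exact hM x (lowSet_subset b hx.1)

lemma level_null (hfκ : ∀ x ∈ L, f x ≤ κ) (hlev : ∀ y < κ, volume (L ∩ f ⁻¹' {y}) = 0)
    (σ : ℝ) : volume ((L ∩ f ⁻¹' {σ}) \ (L ∩ f ⁻¹' {κ})) = 0 := by
  rcases lt_trichotomy σ κ with h | h | h
  · exact measure_mono_null diff_subset (hlev σ h)
  · subst h
    rw [diff_self]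
    simp
  · have : L ∩ f ⁻¹' {σ} = ∅ := by
      ext x
      simp only [mem_inter_iff, mem_preimage, mem_singleton_iff, mem_empty_iff_false, iff_false]
      rintro ⟨hxL, hfx⟩
      exact absurd (hfκ x hxL) (by rw [hfx]; exact not_le.2 h)
    rw [this]
    simp [measure_mono_null (empty_subset _)]

lemma mh_right (hLc : IsCompact L) (hL1 : L ⊆ Icc 0 1) (hf : ContinuousOn f L)
    (σ₀ : ℝ) {ε : ℝ} (hε : 0 < ε) :
    ∃ δ > 0, mh L f κ (σ₀ + δ) < mh L f κ σ₀ + ε := by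
  have hT : ∀ n : ℕ, NullMeasurableSet (lowSet L f κ (σ₀ + 1/(n+1))) volume :=
    fun n => (lowSet_meas hLc hf _).nullMeasurableSet
  have hanti : Antitone (fun n : ℕ => lowSet L f κ (σ₀ + 1/(n+1))) := by
    intro m n hmn
    apply lowSet_mono
    have h1 : (0:ℝ) < m + 1 := by positivity
    have h2 : (m:ℝ) + 1 ≤ n + 1 := by exact_mod_cast Nat.succ_le_succ hmn
    have := one_div_le_one_div_of_le h1 h2
    linarith
  have hiInter : ⋂ n : ℕ, lowSet L f κ (σ₀ + 1/(n+1)) = lowSet L f κ σ₀ := by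
    apply Subset.antisymm
    · intro x hx
      simp only [mem_iInter] at hx
      obtain ⟨⟨hxL, _⟩, hne⟩ := hx 0
      refine ⟨⟨hxL, ?_⟩, hne⟩
      simp only [mem_preimage, mem_Iic]
      by_contra hgt
      push_neg at hgt
      obtain ⟨n, hn⟩ := exists_nat_one_div_lt (by linarith : 0 < f x - σ₀)
      have h2 := (hx n).1.2
      simp only [mem_preimage, mem_Iic] at h2
      linarith
    · intro x hx
      simp only [mem_iInter]
      intro n
      have : (0:ℝ) < 1/(n+1) := by positivity
      exact lowSet_mono (by linarith) hx
  have hfin : volume (lowSet L f κ (σ₀ + 1/((0:ℕ)+1))) ≠ ⊤ :=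
    vol_ne_top ((lowSet_subset _).trans hL1)
  have htend := MeasureTheory.tendsto_measure_iInter_atTop hT hanti ⟨0, hfin⟩
  rw [hiInter] at htend
  have htendR : Filter.Tendsto (fun n : ℕ => mh L f κ (σ₀ + 1/(n+1))) Filter.atTop
      (nhds (mh L f κ σ₀)) := by
    have := (ENNReal.tendsto_toReal (vol_ne_top ((lowSet_subset σ₀).trans hL1))).comp htend
    exact this
  have hev : ∀ᶠ n : ℕ in Filter.atTop, mh L f κ (σ₀ + 1/(n+1)) < mh L f κ σ₀ + ε :=
    htendR.eventually_lt_const (by linarith)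
  obtain ⟨n, hn⟩ := hev.exists
  exact ⟨1/(n+1), by positivity, hn⟩

lemma mh_left (hLc : IsCompact L) (hL1 : L ⊆ Icc 0 1) (hf : ContinuousOn f L)
    (hfκ : ∀ x ∈ L, f x ≤ κ) (hlev : ∀ y < κ, volume (L ∩ f ⁻¹' {y}) = 0)
    (σ₀ : ℝ) {ε : ℝ} (hε : 0 < ε) :
    ∃ δ > 0, mh L f κ σ₀ - ε < mh L f κ (σ₀ - δ) := by
  set W : Set ℝ := (L ∩ f ⁻¹' Iio σ₀) \ (L ∩ f ⁻¹' {κ}) with hW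
  have hmonoS : Monotone (fun n : ℕ => lowSet L f κ (σ₀ - 1/(n+1))) := by
    intro m n hmn
    apply lowSet_mono
    have h1 : (0:ℝ) < m + 1 := by positivity
    have h2 : (m:ℝ) + 1 ≤ n + 1 := by exact_mod_cast Nat.succ_le_succ hmn
    have := one_div_le_one_div_of_le h1 h2
    linarith
  have hiUnion : ⋃ n : ℕ, lowSet L f κ (σ₀ - 1/(n+1)) = W := by
    apply Subset.antisymm
    · intro x hx
      simp only [mem_iUnion] at hx
      obtain ⟨n, ⟨⟨hxL, hle⟩, hne⟩⟩ := hx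
      simp only [mem_preimage, mem_Iic] at hle
      refine ⟨⟨hxL, ?_⟩, hne⟩
      simp only [mem_preimage, mem_Iio]
      have : (0:ℝ) < 1/(n+1) := by positivity
      linarith
    · intro x hx
      obtain ⟨⟨hxL, hlt⟩, hne⟩ := hx
      simp only [mem_preimage, mem_Iio] at hlt
      obtain ⟨n, hn⟩ := exists_nat_one_div_lt (by linarith : 0 < σ₀ - f x)
      simp only [mem_iUnion]
      exact ⟨n, ⟨⟨hxL, by simp only [mem_preimage, mem_Iic]; linarith⟩, hne⟩⟩
  have htend := MeasureTheory.tendsto_measure_iUnion_atTop (μ := volume) hmonoS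
  rw [hiUnion] at htend
  have hWvol : volume W = volume (lowSet L f κ σ₀) := by
    apply le_antisymm
    · apply measure_mono
      rintro x ⟨⟨hxL, hlt⟩, hne⟩
      simp only [mem_preimage, mem_Iio] at hlt
      exact ⟨⟨hxL, by simp only [mem_preimage, mem_Iic]; linarith⟩, hne⟩
    · calc volume (lowSet L f κ σ₀)
          ≤ volume (W ∪ ((L ∩ f ⁻¹' {σ₀}) \ (L ∩ f ⁻¹' {κ}))) := by
            apply measure_mono
            rintro x ⟨⟨hxL, hle⟩, hne⟩
            simp only [mem_preimage, mem_Iic] at hle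
            rcases lt_or_eq_of_le hle with h | h
            · exact Or.inl ⟨⟨hxL, by simp only [mem_preimage, mem_Iio]; exact h⟩, hne⟩
            · exact Or.inr ⟨⟨hxL, by simp only [mem_preimage, mem_singleton_iff]; exact h⟩, hne⟩
        _ ≤ volume W + volume ((L ∩ f ⁻¹' {σ₀}) \ (L ∩ f ⁻¹' {κ})) := measure_union_le _ _
        _ = volume W := by rw [level_null hfκ hlev σ₀, add_zero]
  rw [hWvol] at htend
  have htendR : Filter.Tendsto (fun n : ℕ => mh L f κ (σ₀ - 1/(n+1))) Filter.atTop
      (nhds (mh L f κ σ₀)) :=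
    (ENNReal.tendsto_toReal (vol_ne_top ((lowSet_subset σ₀).trans hL1))).comp htend
  have hev : ∀ᶠ n : ℕ in Filter.atTop, mh L f κ σ₀ - ε < mh L f κ (σ₀ - 1/(n+1)) :=
    htendR.eventually_const_lt (by linarith)
  obtain ⟨n, hn⟩ := hev.exists
  exact ⟨1/(n+1), by positivity, hn⟩

lemma mh_cont (hLc : IsCompact L) (hL1 : L ⊆ Icc 0 1) (hf : ContinuousOn f L)
    (hfκ : ∀ x ∈ L, f x ≤ κ) (hlev : ∀ y < κ, volume (L ∩ f ⁻¹' {y}) = 0) :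
    Continuous (mh L f κ) := by
  rw [Metric.continuous_iff]
  intro σ₀ ε hε
  obtain ⟨δ₁, hδ₁, h₁⟩ := mh_right (κ := κ) hLc hL1 hf σ₀ hε
  obtain ⟨δ₂, hδ₂, h₂⟩ := mh_left hLc hL1 hf hfκ hlev σ₀ hε
  refine ⟨min δ₁ δ₂, lt_min hδ₁ hδ₂, fun a ha => ?_⟩
  rw [Real.dist_eq] at ha
  have hmin1 : min δ₁ δ₂ ≤ δ₁ := min_le_left δ₁ δ₂
  have hmin2 : min δ₁ δ₂ ≤ δ₂ := min_le_right δ₁ δ₂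
  have habs := abs_lt.1 ha
  have ha1 : a ≤ σ₀ + δ₁ := by linarith [habs.2]
  have ha2 : σ₀ - δ₂ ≤ a := by linarith [habs.1]
  have hm := mh_mono (f := f) (κ := κ) hL1
  rw [Real.dist_eq, abs_lt]
  constructor
  · have := hm ha2
    linarith
  · have := hm ha1
    linarith

lemma Hh_cont (hLc : IsCompact L) (hL1 : L ⊆ Icc 0 1) (hf : ContinuousOn f L)
    (hfκ : ∀ x ∈ L, f x ≤ κ) (hlev : ∀ y < κ, volume (L ∩ f ⁻¹' {y}) = 0)
    {M : ℝ} (hM0 : 0 ≤ M) (hM : ∀ x ∈ L, ‖f x‖ ≤ M) :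
    Continuous (Hh L f κ) := by
  rw [Metric.continuous_iff]
  intro σ₀ ε hε
  have hmc := mh_cont hLc hL1 hf hfκ hlev
  rw [Metric.continuous_iff] at hmc
  obtain ⟨δ, hδ, hd⟩ := hmc σ₀ (ε / (M+1)) (by positivity)
  refine ⟨δ, hδ, fun a ha => ?_⟩
  have hkey : |Hh L f κ a - Hh L f κ σ₀| ≤ M * |mh L f κ a - mh L f κ σ₀| := by
    rcases le_total a σ₀ with h | h
    · have hl := Hh_lip (κ := κ) hLc hL1 hf hM h
      have hmm := mh_mono (f := f) (κ := κ) hL1 h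
      rw [abs_sub_comm (Hh L f κ a), abs_sub_comm (mh L f κ a),
        abs_of_nonneg (by linarith : (0:ℝ) ≤ mh L f κ σ₀ - mh L f κ a)]
      exact hl
    · have hl := Hh_lip (κ := κ) hLc hL1 hf hM h
      have hmm := mh_mono (f := f) (κ := κ) hL1 h
      rw [abs_of_nonneg (by linarith : (0:ℝ) ≤ mh L f κ a - mh L f κ σ₀)]
      exact hl
  have hd' := hd a ha
  rw [Real.dist_eq] at hd'
  rw [Real.dist_eq]
  calc |Hh L f κ a - Hh L f κ σ₀| ≤ M * |mh L f κ a - mh L f κ σ₀| := hkey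
    _ ≤ M * (ε / (M+1)) := by
        apply mul_le_mul_of_nonneg_left (le_of_lt hd') hM0
    _ < ε := by
        rw [div_eq_inv_mul, ← mul_assoc]
        have : M * (M+1)⁻¹ < 1 := by
          rw [mul_inv_lt_iff₀ (by linarith)]
          linarith
        nlinarith

lemma ae_restrict_of_null {S : Set ℝ} {P : ℝ → Prop} (hS : MeasurableSet S)
    (h : volume ({x | ¬ P x} ∩ S) = 0) : ∀ᵐ x ∂(volume.restrict S), P x := by
  rw [ae_iff, Measure.restrict_apply' hS]
  exact h

lemma ae_restrict_of_forall {S : Set ℝ} {P : ℝ → Prop} (hS : MeasurableSet S)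
    (h : ∀ x ∈ S, P x) : ∀ᵐ x ∂(volume.restrict S), P x := by
  apply ae_restrict_of_null hS
  have : {x | ¬ P x} ∩ S = ∅ := by
    ext x
    simp only [mem_inter_iff, mem_setOf_eq, mem_empty_iff_false, iff_false, not_and]
    intro hnp hxS
    exact hnp (h x hxS)
  rw [this]
  exact measure_empty

lemma integral_const_on {C : Set ℝ} {f : ℝ → ℝ} {κ : ℝ} (hCm : MeasurableSet C)
    (hC : ∀ x ∈ C, f x = κ) : ∫ x in C, f x = κ * vol C := by
  rw [setIntegral_congr_fun hCm hC, setIntegral_const, smul_eq_mul, mul_comm]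
  rfl

lemma vol_zero_iff {S : Set ℝ} (hS : S ⊆ Icc 0 1) : vol S = 0 ↔ volume S = 0 := by
  unfold vol
  rw [ENNReal.toReal_eq_zero_iff]
  constructor
  · rintro (h | h)
    · exact h
    · exact absurd h (vol_ne_top hS)
  · intro h
    exact Or.inl h

lemma lemA {L : Set ℝ} {f : ℝ → ℝ} {κ : ℝ}
    (hLc : IsCompact L) (hL1 : L ⊆ Icc 0 1) (hf : ContinuousOn f L)
    (hfκ : ∀ x ∈ L, f x ≤ κ) (hlev : ∀ y < κ, volume (L ∩ f ⁻¹' {y}) = 0)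
    {w : ℝ} (hw0 : 0 < w) (hw1 : w < vol L)
    {Y Z : Set ℝ} (hYm : MeasurableSet Y) (hYL : Y ⊆ L) (hYvol : vol Y = w)
    (hYint : ∫ x in Y, f x < 0)
    (hZm : MeasurableSet Z) (hZL : Z ⊆ L) (hZvol : vol Z = w)
    (hZint : 0 < ∫ x in Z, f x) :
    ∃ E : Set ℝ, IsCompact E ∧ E ⊆ L ∧ vol E = w ∧ ∫ x in E, f x = 0 := by
  have hInt : IntegrableOn f L volume := hf.integrableOn_compact hLc
  obtain ⟨M₀, hM₀⟩ := hLc.exists_bound_of_continuousOn hf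
  set M : ℝ := max M₀ 0 with hMdef
  have hM : ∀ x ∈ L, ‖f x‖ ≤ M := fun x hx => (hM₀ x hx).trans (le_max_left _ _)
  have hM0 : 0 ≤ M := le_max_right _ _
  set A : Set ℝ := L ∩ f ⁻¹' {κ} with hAdef
  have hAc : IsCompact A := compact_preimage hLc hf isClosed_singleton
  have hAm : MeasurableSet A := hAc.measurableSet
  have hA1 : A ⊆ Icc 0 1 := inter_subset_left.trans hL1
  set p : ℝ := vol A with hpdef
  set q : ℝ := mh L f κ κ with hqdef
  have hp0 : 0 ≤ p := vol_nonneg A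
  have hq0 : 0 ≤ q := vol_nonneg _
  have hlowκ : lowSet L f κ κ = L \ A := by
    ext x
    simp only [lowSet, mem_diff, mem_inter_iff, mem_preimage, mem_Iic, hAdef]
    constructor
    · rintro ⟨⟨hxL, _⟩, hne⟩
      exact ⟨hxL, fun h => hne h⟩
    · rintro ⟨hxL, hne⟩
      exact ⟨⟨hxL, hfκ x hxL⟩, hne⟩
  have hLsplit : vol L = q + p := by
    have h1 : vol (L \ A) = vol L - p := vol_diff hL1 inter_subset_left hAm
    rw [hqdef, mh, hlowκ, h1]
    ring
  have hκpos : 0 < κ := by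
    have h1 : ∫ x in Z, f x ≤ κ * vol Z :=
      setIntegral_le_const (hZL.trans hL1) (hInt.mono_set hZL)
        (ae_restrict_of_forall hZm (fun x hx => hfκ x (hZL hx)))
    rw [hZvol] at h1
    nlinarith
  set t₀ : ℝ := -(M+1) with ht₀def
  have h_t₀ : ∀ x ∈ L, t₀ < f x := by
    intro x hx
    have := hM x hx
    rw [Real.norm_eq_abs] at this
    have := abs_le.1 this
    simp only [ht₀def]
    linarith [this.1]
  have hlow_t₀ : lowSet L f κ t₀ = ∅ := by
    ext x
    simp only [lowSet, mem_diff, mem_inter_iff, mem_preimage, mem_Iic, mem_empty_iff_false,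
      iff_false, not_and]
    rintro ⟨hxL, hle⟩
    exact absurd hle (not_le.2 (h_t₀ x hxL))
  have hmh_t₀ : mh L f κ t₀ = 0 := by rw [mh, hlow_t₀]; simp [vol]
  have hHh_t₀ : Hh L f κ t₀ = 0 := by rw [Hh, hlow_t₀]; simp
  have hLne : L.Nonempty := by
    by_contra h
    rw [not_nonempty_iff_eq_empty] at h
    rw [h] at hw1
    simp [vol] at hw1
    linarith
  have ht₀κ : t₀ ≤ κ := by
    obtain ⟨x, hx⟩ := hLne
    exact le_trans (le_of_lt (h_t₀ x hx)) (hfκ x hx)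
  have hHh0 : ∀ σ, t₀ ≤ σ → mh L f κ σ = 0 → Hh L f κ σ = 0 := by
    intro σ hσ hmh
    have hl := Hh_lip (κ := κ) hLc hL1 hf hM hσ
    rw [hmh_t₀, hHh_t₀, hmh] at hl
    simpa using hl
  have hmhc : Continuous (mh L f κ) := mh_cont hLc hL1 hf hfκ hlev
  have hquant : ∀ x : ℝ, 0 ≤ x → x ≤ q → ∃ t, t ∈ Icc t₀ κ ∧ mh L f κ t = x := by
    intro x h0 h1
    have := intermediate_value_Icc ht₀κ hmhc.continuousOn
    rw [hmh_t₀] at this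
    obtain ⟨t, htmem, htval⟩ := this ⟨h0, h1⟩
    exact ⟨t, htmem, htval⟩
  have hsl : ∀ β : ℝ, 0 ≤ β → β ≤ p →
      ∃ C, IsCompact C ∧ MeasurableSet C ∧ C ⊆ A ∧ vol C = β := by
    intro β h0 h1
    obtain ⟨v, hv⟩ := sliceIic hA1 h0 h1
    refine ⟨A ∩ Iic v, ?_, ?_, inter_subset_left, hv⟩
    · exact hAc.of_isClosed_subset (hAc.isClosed.inter isClosed_Iic) inter_subset_left
    · exact hAm.inter measurableSet_Iic
  -- the two IVT base points
  have hwpq : max (w - p) 0 ≤ min w q := by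
    rcases le_total w q with h | h
    · simp only [le_min_iff, max_le_iff]
      constructor
      · constructor <;> linarith
      · constructor <;> linarith
    · simp only [le_min_iff, max_le_iff]
      constructor
      · constructor <;> linarith [hLsplit, hw1]
      · constructor <;> linarith [hLsplit, hw1]
  obtain ⟨t2, ht2mem, ht2⟩ := hquant (min w q) (le_min (le_of_lt hw0) hq0) (min_le_right _ _)
  have ht12ivt := intermediate_value_Icc ht2mem.1 hmhc.continuousOn
  rw [hmh_t₀, ht2] at ht12ivt
  obtain ⟨t1, ht1mem, ht1⟩ := ht12ivt ⟨le_max_right _ _, hwpq⟩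
  have ht1κ : t1 ≤ κ := le_trans ht1mem.2 ht2mem.2
  set J : ℝ → ℝ := fun σ => Hh L f κ σ + κ * (w - mh L f κ σ) with hJdef
  have hJc : Continuous J :=
    ((Hh_cont hLc hL1 hf hfκ hlev hM0 hM).add (continuous_const.mul
      (continuous_const.sub hmhc)))
  -- B2 : the bottom-type set of measure w
  have hmin0 : 0 ≤ w - min w q := by linarith [min_le_left w q]
  have hminp : w - min w q ≤ p := by
    rcases le_total w q with h | h
    · rw [min_eq_left h]; simpa using hp0
    · rw [min_eq_right h]; linarith
  obtain ⟨C2, hC2c, hC2m, hC2A, hC2vol⟩ := hsl (w - min w q) hmin0 hminp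
  set B2 : Set ℝ := lowSet L f κ t2 ∪ C2 with hB2def
  have hdisj2 : Disjoint (lowSet L f κ t2) C2 :=
    disjoint_left.2 fun x hx hxC => hx.2 (hC2A hxC)
  have hB2m : MeasurableSet B2 := (lowSet_meas hLc hf t2).union hC2m
  have hB2L : B2 ⊆ L := union_subset (lowSet_subset t2) (hC2A.trans inter_subset_left)
  have hB2vol : vol B2 = w := by
    rw [hB2def, vol_union ((lowSet_subset t2).trans hL1) ((hC2A.trans hA1)) hdisj2 hC2m]
    show mh L f κ t2 + vol C2 = w
    rw [ht2, hC2vol]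
    ring
  have hfC2 : ∀ x ∈ C2, f x = κ := by
    intro x hx
    have := (hC2A hx).2
    simpa using this
  have hB2int : ∫ x in B2, f x = J t2 := by
    rw [hB2def, setIntegral_union hdisj2 hC2m (hInt.mono_set (lowSet_subset t2))
      (hInt.mono_set (hC2A.trans inter_subset_left)), integral_const_on hC2m hfC2, hC2vol]
    show Hh L f κ t2 + κ * (w - min w q) = J t2
    simp only [hJdef, ht2]
  have hLm : MeasurableSet L := hLc.measurableSet
  have hbt : ∃ θ, (∀ᵐ x ∂(volume.restrict B2), f x ≤ θ) ∧
      (∀ᵐ x ∂(volume.restrict (L \ B2)), θ ≤ f x) := by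
    rcases le_total w q with hwq | hwq
    · refine ⟨t2, ?_, ?_⟩
      · apply ae_restrict_of_null hB2m
        apply measure_mono_null (t := C2)
        · rintro x ⟨hbad, hxB⟩
          simp only [mem_setOf_eq, not_le] at hbad
          rcases hxB with hlow | hC
          · have : f x ≤ t2 := hlow.1.2
            linarith
          · exact hC
        · rw [← vol_zero_iff (hC2A.trans hA1), hC2vol, min_eq_left hwq]; ring
      · apply ae_restrict_of_forall (hLm.diff hB2m)
        rintro x ⟨hxL, hxn⟩
        by_cases hxA : x ∈ A
        · have : f x = κ := by simpa using hxA.2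
          rw [this]; exact ht2mem.2
        · by_contra hlt
          push_neg at hlt
          exact hxn (Or.inl ⟨⟨hxL, le_of_lt hlt⟩, hxA⟩)
    · refine ⟨κ, ?_, ?_⟩
      · exact ae_restrict_of_forall hB2m (fun x hx => hfκ x (hB2L hx))
      · apply ae_restrict_of_null (hLm.diff hB2m)
        apply measure_mono_null (t := lowSet L f κ κ \ lowSet L f κ t2)
        · rintro x ⟨hbad, hxL, hxn⟩
          simp only [mem_setOf_eq, not_le] at hbad
          have hxA : x ∉ A := by
            intro hxA
            have : f x = κ := by simpa using hxA.2
            linarith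
          refine ⟨⟨⟨hxL, hfκ x hxL⟩, hxA⟩, fun hlow => hxn (Or.inl hlow)⟩
        · rw [← vol_zero_iff (diff_subset.trans ((lowSet_subset κ).trans hL1)),
            vol_lowSet_diff hLc hL1 hf ht2mem.2]
          show mh L f κ κ - mh L f κ t2 = 0
          rw [ht2, min_eq_right hwq]
          ring
  obtain ⟨θ, hθ1, hθ2⟩ := hbt
  have hJt2 : J t2 < 0 := by
    have := bathtub_min hL1 hInt hB2m hYm hB2L hYL (hB2vol.trans hYvol.symm) hθ1 hθ2
    rw [hB2int] at this
    linarith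
  have hJκ : J κ < 0 := by
    have hDle : ∫ x in (lowSet L f κ κ \ lowSet L f κ t2), f x ≤
        κ * vol (lowSet L f κ κ \ lowSet L f κ t2) := by
      apply setIntegral_le_const (diff_subset.trans ((lowSet_subset κ).trans hL1))
        (hInt.mono_set (diff_subset.trans (lowSet_subset κ)))
      apply ae_restrict_of_forall ((lowSet_meas hLc hf κ).diff (lowSet_meas hLc hf t2))
      intro x hx
      exact hfκ x (lowSet_subset κ hx.1)
    rw [vol_lowSet_diff hLc hL1 hf ht2mem.2] at hDle
    have hHd := Hh_diff (κ := κ) hLc hL1 hf ht2mem.2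
    have hmt2 : mh L f κ t2 = min w q := ht2
    have : J κ = Hh L f κ κ + κ * (w - q) := rfl
    have hJt2' : J t2 = Hh L f κ t2 + κ * (w - min w q) := by simp only [hJdef, ht2]
    nlinarith [hDle, hHd, hJt2, hκpos]
  have hmono := mh_mono (f := f) (κ := κ) hL1
  rcases le_or_gt 0 (J t1) with hV | hV
  · -- Phase A : root between t1 and t2
    have ht12 : t1 ≤ t2 := ht1mem.2
    obtain ⟨σ, hσmem, hσval⟩ := intermediate_value_Icc' ht12 hJc.continuousOn
      ⟨le_of_lt hJt2, hV⟩
    have hσκ : σ < κ := by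
      rcases lt_or_eq_of_le (le_trans hσmem.2 ht2mem.2) with h | h
      · exact h
      · exfalso
        rw [h] at hσval
        linarith
    have hβ1 : max (w - p) 0 ≤ mh L f κ σ := by
      rw [← ht1]
      exact hmono hσmem.1
    have hβ2 : mh L f κ σ ≤ min w q := by
      rw [← ht2]
      exact hmono hσmem.2
    obtain ⟨C, hCc, hCm, hCA, hCvol⟩ := hsl (w - mh L f κ σ)
      (by linarith [min_le_left w q])
      (by linarith [le_max_left (w - p) 0])
    have hloweq : L ∩ f ⁻¹' Iic σ = lowSet L f κ σ := by
      ext x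
      simp only [lowSet, mem_diff, mem_inter_iff, mem_preimage, mem_Iic, mem_singleton_iff]
      constructor
      · rintro ⟨hxL, hle⟩
        refine ⟨⟨hxL, hle⟩, ?_⟩
        rintro ⟨-, hfx⟩
        have : f x = κ := hfx
        linarith
      · rintro ⟨⟨hxL, hle⟩, -⟩
        exact ⟨hxL, hle⟩
    have hdisjC : Disjoint (lowSet L f κ σ) C :=
      disjoint_left.2 fun x hx hxC => hx.2 (hCA hxC)
    refine ⟨(L ∩ f ⁻¹' Iic σ) ∪ C, ?_, ?_, ?_, ?_⟩
    · exact (compact_preimage hLc hf isClosed_Iic).union hCc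
    · exact union_subset inter_subset_left (hCA.trans inter_subset_left)
    · rw [hloweq, vol_union ((lowSet_subset σ).trans hL1) (hCA.trans hA1) hdisjC hCm, hCvol]
      show mh L f κ σ + (w - mh L f κ σ) = w
      ring
    · rw [hloweq, setIntegral_union hdisjC hCm (hInt.mono_set (lowSet_subset σ))
        (hInt.mono_set (hCA.trans inter_subset_left)),
        integral_const_on hCm (fun x hx => (hCA hx).2), hCvol]
      show Hh L f κ σ + κ * (w - mh L f κ σ) = 0
      exact hσval
  · -- Phase B
    -- Phase B : root between t1 and κ, keeping the full atom
    have hwp : p < w := by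
      by_contra hle
      push_neg at hle
      have hmax0 : max (w - p) 0 = 0 := max_eq_right (by linarith)
      have hmt1 : mh L f κ t1 = 0 := by rw [ht1, hmax0]
      have hHt1 : Hh L f κ t1 = 0 := hHh0 t1 ht1mem.1 hmt1
      have hJt1 : J t1 = κ * w := by
        show Hh L f κ t1 + κ * (w - mh L f κ t1) = κ * w
        rw [hHt1, hmt1]
        ring
      nlinarith
    have hmt1 : mh L f κ t1 = w - p := by
      rw [ht1]
      exact max_eq_left (by linarith)
    set cb : ℝ := vol L - w with hcbdef
    have hcb0 : 0 < cb := by simp only [hcbdef]; linarith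
    have hcbq : cb < q := by simp only [hcbdef]; linarith
    have hquant' : ∀ x : ℝ, ∃ t, 0 ≤ x → x ≤ q → (t ∈ Icc t₀ κ ∧ mh L f κ t = x) := by
      intro x
      by_cases h : 0 ≤ x ∧ x ≤ q
      · obtain ⟨t, ht⟩ := hquant x h.1 h.2
        exact ⟨t, fun _ _ => ht⟩
      · exact ⟨t₀, fun h1 h2 => absurd ⟨h1, h2⟩ h⟩
    choose τ hτ using hquant'
    set G : ℝ → ℝ := fun x => Hh L f κ (τ x) with hGdef
    have hGval : ∀ x, 0 ≤ x → x ≤ q → mh L f κ (τ x) = x := fun x h1 h2 => (hτ x h1 h2).2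
    have hGmem : ∀ x, 0 ≤ x → x ≤ q → τ x ∈ Icc t₀ κ := fun x h1 h2 => (hτ x h1 h2).1
    have hGlip : ∀ x ∈ Icc (0:ℝ) q, ∀ y ∈ Icc (0:ℝ) q, |G x - G y| ≤ M * |x - y| := by
      rintro x ⟨hx1, hx2⟩ y ⟨hy1, hy2⟩
      rcases le_total (τ x) (τ y) with h | h
      · have hl := Hh_lip (κ := κ) hLc hL1 hf hM h
        rw [hGval x hx1 hx2, hGval y hy1 hy2] at hl
        rw [abs_sub_comm]
        calc |G y - G x| ≤ M * (y - x) := hl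
          _ ≤ M * |x - y| := by
              apply mul_le_mul_of_nonneg_left _ hM0
              rw [abs_sub_comm]
              exact le_abs_self _
      · have hl := Hh_lip (κ := κ) hLc hL1 hf hM h
        rw [hGval x hx1 hx2, hGval y hy1 hy2] at hl
        calc |G x - G y| ≤ M * (x - y) := hl
          _ ≤ M * |x - y| := mul_le_mul_of_nonneg_left (le_abs_self _) hM0
    have hqκ : mh L f κ κ = q := rfl
    have hxmem : ∀ σ ∈ Icc t1 κ, 0 ≤ mh L f κ σ - (w - p) ∧ mh L f κ σ - (w - p) ≤ cb := by
      rintro σ ⟨h1, h2⟩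
      constructor
      · have := hmono h1
        rw [hmt1] at this
        linarith
      · have := hmono h2
        rw [hqκ] at this
        simp only [hcbdef]
        linarith
    set JB : ℝ → ℝ := fun σ => Hh L f κ σ - G (mh L f κ σ - (w - p)) + κ * p with hJBdef
    have hJBc : ContinuousOn JB (Icc t1 κ) := by
      apply ContinuousOn.add ?_ continuousOn_const
      apply ContinuousOn.sub ((Hh_cont hLc hL1 hf hfκ hlev hM0 hM).continuousOn)
      have hGc : ContinuousOn G (Icc 0 q) := by
        apply LipschitzOnWith.continuousOn (K := M.toNNReal)
        rw [lipschitzOnWith_iff_dist_le_mul]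
        intro x hx y hy
        rw [Real.dist_eq, Real.dist_eq, Real.coe_toNNReal M hM0]
        exact hGlip x hx y hy
      exact ContinuousOn.comp hGc
        (((hmhc.sub continuous_const).continuousOn))
        (fun σ hσ => ⟨(hxmem σ hσ).1, le_trans (hxmem σ hσ).2 (le_of_lt hcbq)⟩)
    have hG0 : G 0 = 0 := by
      apply hHh0 (τ 0) (hGmem 0 le_rfl hq0).1
      exact hGval 0 le_rfl hq0
    have hJBt1 : JB t1 = J t1 := by
      show Hh L f κ t1 - G (mh L f κ t1 - (w - p)) + κ * p
        = Hh L f κ t1 + κ * (w - mh L f κ t1)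
      rw [hmt1, sub_self, hG0]
      ring
    -- the top-type set
    have hτcval : mh L f κ (τ cb) = cb := hGval cb (le_of_lt hcb0) (le_of_lt hcbq)
    have hτcmem : τ cb ∈ Icc t₀ κ := hGmem cb (le_of_lt hcb0) (le_of_lt hcbq)
    have hτcκ : τ cb < κ := by
      rcases lt_or_eq_of_le hτcmem.2 with h | h
      · exact h
      · exfalso
        rw [h, hqκ] at hτcval
        linarith
    set T : Set ℝ := L ∩ f ⁻¹' Ici (τ cb) with hTdef
    have hTc : IsCompact T := compact_preimage hLc hf isClosed_Ici
    have hTm : MeasurableSet T := hTc.measurableSet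
    have hTL : T ⊆ L := inter_subset_left
    have hLdiffT : L \ T = L ∩ f ⁻¹' Iio (τ cb) := by
      ext x
      simp only [hTdef, mem_diff, mem_inter_iff, mem_preimage, mem_Ici, mem_Iio, not_and, not_le]
      constructor
      · rintro ⟨hxL, h⟩
        exact ⟨hxL, h hxL⟩
      · rintro ⟨hxL, h⟩
        exact ⟨hxL, fun _ => h⟩
    have hIioAe : (L ∩ f ⁻¹' Iio (τ cb) : Set ℝ) =ᵐ[volume] lowSet L f κ (τ cb) := by
      rw [ae_eq_set]
      refine ⟨?_, ?_⟩
      · have hempty : (L ∩ f ⁻¹' Iio (τ cb)) \ lowSet L f κ (τ cb) = ∅ := by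
          rw [eq_empty_iff_forall_notMem]
          rintro x ⟨⟨hxL, hlt⟩, hns⟩
          have hlt' : f x < τ cb := hlt
          apply hns
          refine ⟨⟨hxL, le_of_lt hlt'⟩, ?_⟩
          rintro ⟨-, hfx⟩
          have hfx' : f x = κ := hfx
          linarith
        rw [hempty]
        exact measure_empty
      · apply measure_mono_null (t := (L ∩ f ⁻¹' {τ cb}) \ (L ∩ f ⁻¹' {κ}))
        · rintro x ⟨⟨⟨hxL, hle⟩, hnA⟩, hnin⟩
          have hle' : f x ≤ τ cb := hle
          have hge : τ cb ≤ f x := by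
            by_contra hc
            push_neg at hc
            exact hnin ⟨hxL, hc⟩
          exact ⟨⟨hxL, le_antisymm hle' hge⟩, hnA⟩
        · exact level_null hfκ hlev (τ cb)
    have hvolIio : vol (L ∩ f ⁻¹' Iio (τ cb)) = cb := by
      unfold vol
      rw [measure_congr hIioAe]
      exact hτcval
    have hvolT : vol T = w := by
      have h1 : vol (L \ T) = vol L - vol T := vol_diff hL1 hTL hTm
      rw [hLdiffT, hvolIio] at h1
      simp only [hcbdef] at h1
      linarith
    have hcbrw : mh L f κ κ - (w - p) = cb := by
      rw [hqκ]
      simp only [hcbdef]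
      linarith
    have hintT : ∫ x in T, f x = JB κ := by
      have hTsub : L = (L \ T) ∪ T := (diff_union_of_subset hTL).symm
      have hsplitL : ∫ x in L, f x = (∫ x in (L \ T), f x) + ∫ x in T, f x := by
        conv_lhs => rw [hTsub]
        exact setIntegral_union disjoint_sdiff_self_left hTm
          (hInt.mono_set diff_subset) (hInt.mono_set hTL)
      have hintdiff : ∫ x in (L \ T), f x = G cb := by
        rw [hLdiffT, setIntegral_congr_set hIioAe]
        rfl
      have hintL : ∫ x in L, f x = Hh L f κ κ + κ * p := by
        have hLsp : L = lowSet L f κ κ ∪ A := by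
          rw [hlowκ, diff_union_of_subset inter_subset_left]
        conv_lhs => rw [hLsp]
        rw [setIntegral_union (disjoint_left.2 fun x hx hxA => hx.2 hxA) hAm
          (hInt.mono_set (lowSet_subset κ)) (hInt.mono_set inter_subset_left),
          integral_const_on hAm (fun x hx => hx.2)]
        rfl
      have hJBκval : JB κ = Hh L f κ κ - G cb + κ * p := by
        show Hh L f κ κ - G (mh L f κ κ - (w - p)) + κ * p = _
        rw [hcbrw]
      rw [hJBκval]
      rw [hintL, hintdiff] at hsplitL
      linarith
    have hJBκ : 0 < JB κ := by
      have hb := bathtub_max hL1 hInt hTm hZm hTL hZL (hvolT.trans hZvol.symm)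
        (ae_restrict_of_forall hTm (fun x hx => hx.2))
        (ae_restrict_of_forall (hLm.diff hTm) (fun x hx => by
          rw [hLdiffT] at hx
          exact le_of_lt hx.2))
      rw [hintT] at hb
      linarith
    obtain ⟨σ, hσmem, hσval⟩ := intermediate_value_Icc ht1κ hJBc
      ⟨by rw [hJBt1]; exact le_of_lt hV, le_of_lt hJBκ⟩
    set xb : ℝ := mh L f κ σ - (w - p) with hxbdef
    have hxb := hxmem σ hσmem
    have hxb1 : 0 ≤ xb := hxb.1
    have hxb2 : xb ≤ cb := hxb.2
    have hxbq : xb ≤ q := le_trans hxb2 (le_of_lt hcbq)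
    have hτbval : mh L f κ (τ xb) = xb := hGval xb hxb.1 hxbq
    have hτbmem : τ xb ∈ Icc t₀ κ := hGmem xb hxb.1 hxbq
    have hτbκ : τ xb < κ := by
      rcases lt_or_eq_of_le hτbmem.2 with h | h
      · exact h
      · exfalso
        rw [h, hqκ] at hτbval
        linarith [hxb2, hcbq]
    have hτbσ : τ xb ≤ σ := by
      by_contra hc
      push_neg at hc
      have h2 := hmono (le_of_lt hc)
      rw [hτbval] at h2
      have h3 : mh L f κ σ - (w - p) = xb := rfl
      linarith [hwp]
    set D : Set ℝ := (L ∩ f ⁻¹' (Icc (τ xb) σ)) \ A with hDdef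
    have hDm : MeasurableSet D := ((compact_preimage hLc hf isClosed_Icc).measurableSet).diff hAm
    have hDae : D =ᵐ[volume] (lowSet L f κ σ \ lowSet L f κ (τ xb) : Set ℝ) := by
      rw [ae_eq_set]
      refine ⟨?_, ?_⟩
      · apply measure_mono_null (t := (L ∩ f ⁻¹' {τ xb}) \ (L ∩ f ⁻¹' {κ}))
        · rintro x ⟨⟨⟨hxL, hfx⟩, hnA⟩, hnd⟩
          have hfx1 : τ xb ≤ f x := hfx.1
          have hfx2 : f x ≤ σ := hfx.2
          have hxlow : x ∈ lowSet L f κ σ := ⟨⟨hxL, hfx2⟩, hnA⟩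
          have hxlowτ : x ∈ lowSet L f κ (τ xb) := by
            by_contra hcc
            exact hnd ⟨hxlow, hcc⟩
          have : f x ≤ τ xb := hxlowτ.1.2
          exact ⟨⟨hxL, le_antisymm this hfx1⟩, hnA⟩
        · exact level_null hfκ hlev (τ xb)
      · have hempty : (lowSet L f κ σ \ lowSet L f κ (τ xb)) \ D = ∅ := by
          rw [eq_empty_iff_forall_notMem]
          rintro x ⟨⟨⟨⟨hxL, hle⟩, hnA⟩, hnτ⟩, hnD⟩
          have hle' : f x ≤ σ := hle
          have hgt : ¬ (f x ≤ τ xb) := by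
            intro hcc
            exact hnτ ⟨⟨hxL, hcc⟩, hnA⟩
          push_neg at hgt
          exact hnD ⟨⟨hxL, le_of_lt hgt, hle'⟩, hnA⟩
        rw [hempty]
        exact measure_empty
    have hvolD : vol D = w - p := by
      unfold vol
      rw [measure_congr hDae]
      have := vol_lowSet_diff (κ := κ) hLc hL1 hf hτbσ
      unfold vol at this
      rw [this, hτbval]
      show mh L f κ σ - (mh L f κ σ - (w - p)) = w - p
      ring
    have hintD : ∫ x in D, f x = Hh L f κ σ - G xb := by
      rw [setIntegral_congr_set hDae, ← Hh_diff hLc hL1 hf hτbσ]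
    have hdisjDA : Disjoint D A := disjoint_sdiff_left
    have hDL : D ⊆ L := diff_subset.trans inter_subset_left
    have hpre : L ∩ f ⁻¹' (Icc (τ xb) σ ∪ {κ}) = D ∪ A := by
      ext x
      simp only [hDdef, hAdef, mem_inter_iff, mem_preimage, mem_union, mem_Icc,
        mem_singleton_iff, mem_diff]
      constructor
      · rintro ⟨hxL, hIcc | hκ⟩
        · by_cases hxA : f x = κ
          · exact Or.inr ⟨hxL, hxA⟩
          · exact Or.inl ⟨⟨hxL, hIcc⟩, fun hc => hxA hc.2⟩
        · exact Or.inr ⟨hxL, hκ⟩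
      · rintro (⟨⟨hxL, hIcc⟩, -⟩ | ⟨hxL, hκ⟩)
        · exact ⟨hxL, Or.inl hIcc⟩
        · exact ⟨hxL, Or.inr hκ⟩
    refine ⟨D ∪ A, ?_, ?_, ?_, ?_⟩
    · rw [← hpre]
      exact compact_preimage hLc hf (isClosed_Icc.union isClosed_singleton)
    · exact union_subset hDL inter_subset_left
    · rw [vol_union (hDL.trans hL1) hA1 hdisjDA hAm, hvolD]
      show w - p + p = w
      ring
    · rw [setIntegral_union hdisjDA hAm (hInt.mono_set hDL)
        (hInt.mono_set inter_subset_left),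
        integral_const_on hAm (fun x hx => hx.2), hintD]
      show Hh L f κ σ - G xb + κ * p = 0
      exact hσval

lemma exists_bot_top {L : Set ℝ} {f : ℝ → ℝ} {κ : ℝ}
    (hLc : IsCompact L) (hL1 : L ⊆ Icc 0 1) (hf : ContinuousOn f L)
    (hfκ : ∀ x ∈ L, f x ≤ κ) (hlev : ∀ y < κ, volume (L ∩ f ⁻¹' {y}) = 0)
    (hLne : L.Nonempty)
    {w : ℝ} (hw0 : 0 ≤ w) (hw1 : w ≤ vol L) :
    (∃ B θB, MeasurableSet B ∧ B ⊆ L ∧ vol B = w ∧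
      (∀ᵐ x ∂volume.restrict B, f x ≤ θB) ∧
      (∀ᵐ x ∂volume.restrict (L \ B), θB ≤ f x)) ∧
    (∃ T θT, MeasurableSet T ∧ T ⊆ L ∧ vol T = w ∧
      (∀ᵐ x ∂volume.restrict T, θT ≤ f x) ∧
      (∀ᵐ x ∂volume.restrict (L \ T), f x ≤ θT)) := by
  obtain ⟨M₀, hM₀⟩ := hLc.exists_bound_of_continuousOn hf
  set M : ℝ := max M₀ 0 with hMdef
  have hM : ∀ x ∈ L, ‖f x‖ ≤ M := fun x hx => (hM₀ x hx).trans (le_max_left _ _)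
  have hM0 : 0 ≤ M := le_max_right _ _
  set A : Set ℝ := L ∩ f ⁻¹' {κ} with hAdef
  have hAc : IsCompact A := compact_preimage hLc hf isClosed_singleton
  have hAm : MeasurableSet A := hAc.measurableSet
  have hA1 : A ⊆ Icc 0 1 := inter_subset_left.trans hL1
  set p : ℝ := vol A with hpdef
  set q : ℝ := mh L f κ κ with hqdef
  have hp0 : 0 ≤ p := vol_nonneg A
  have hq0 : 0 ≤ q := vol_nonneg _
  have hlowκ : lowSet L f κ κ = L \ A := by
    ext x
    simp only [lowSet, mem_diff, mem_inter_iff, mem_preimage, mem_Iic, hAdef]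
    constructor
    · rintro ⟨⟨hxL, _⟩, hne⟩
      exact ⟨hxL, fun h => hne h⟩
    · rintro ⟨hxL, hne⟩
      exact ⟨⟨hxL, hfκ x hxL⟩, hne⟩
  have hLsplit : vol L = q + p := by
    have h1 : vol (L \ A) = vol L - p := vol_diff hL1 inter_subset_left hAm
    rw [hqdef, mh, hlowκ, h1]
    ring
  set t₀ : ℝ := -(M+1) with ht₀def
  have h_t₀ : ∀ x ∈ L, t₀ < f x := by
    intro x hx
    have := hM x hx
    rw [Real.norm_eq_abs] at this
    have := abs_le.1 this
    simp only [ht₀def]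
    linarith [this.1]
  have hlow_t₀ : lowSet L f κ t₀ = ∅ := by
    ext x
    simp only [lowSet, mem_diff, mem_inter_iff, mem_preimage, mem_Iic, mem_empty_iff_false,
      iff_false, not_and]
    rintro ⟨hxL, hle⟩
    exact absurd hle (not_le.2 (h_t₀ x hxL))
  have hmh_t₀ : mh L f κ t₀ = 0 := by rw [mh, hlow_t₀]; simp [vol]
  have ht₀κ : t₀ ≤ κ := by
    obtain ⟨x, hx⟩ := hLne
    exact le_trans (le_of_lt (h_t₀ x hx)) (hfκ x hx)
  have hmhc : Continuous (mh L f κ) := mh_cont hLc hL1 hf hfκ hlev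
  have hquant : ∀ x : ℝ, 0 ≤ x → x ≤ q → ∃ t, t ∈ Icc t₀ κ ∧ mh L f κ t = x := by
    intro x h0 h1
    have := intermediate_value_Icc ht₀κ hmhc.continuousOn
    rw [hmh_t₀] at this
    obtain ⟨t, htmem, htval⟩ := this ⟨h0, h1⟩
    exact ⟨t, htmem, htval⟩
  have hsl : ∀ β : ℝ, 0 ≤ β → β ≤ p →
      ∃ C, IsCompact C ∧ MeasurableSet C ∧ C ⊆ A ∧ vol C = β := by
    intro β h0 h1
    obtain ⟨v, hv⟩ := sliceIic hA1 h0 h1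
    refine ⟨A ∩ Iic v, ?_, ?_, inter_subset_left, hv⟩
    · exact hAc.of_isClosed_subset (hAc.isClosed.inter isClosed_Iic) inter_subset_left
    · exact hAm.inter measurableSet_Iic
  have hLm : MeasurableSet L := hLc.measurableSet
  constructor
  · -- bottom-type set of measure w
    obtain ⟨t2, ht2mem, ht2⟩ := hquant (min w q) (le_min hw0 hq0) (min_le_right _ _)
    have hmin0 : 0 ≤ w - min w q := by linarith [min_le_left w q]
    have hminp : w - min w q ≤ p := by
      rcases le_total w q with h | h
      · rw [min_eq_left h]; simpa using hp0
      · rw [min_eq_right h]; linarith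
    obtain ⟨C2, hC2c, hC2m, hC2A, hC2vol⟩ := hsl (w - min w q) hmin0 hminp
    set B2 : Set ℝ := lowSet L f κ t2 ∪ C2 with hB2def
    have hdisj2 : Disjoint (lowSet L f κ t2) C2 :=
      disjoint_left.2 fun x hx hxC => hx.2 (hC2A hxC)
    have hB2m : MeasurableSet B2 := (lowSet_meas hLc hf t2).union hC2m
    have hB2L : B2 ⊆ L := union_subset (lowSet_subset t2) (hC2A.trans inter_subset_left)
    have hB2vol : vol B2 = w := by
      rw [hB2def, vol_union ((lowSet_subset t2).trans hL1) ((hC2A.trans hA1)) hdisj2 hC2m]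
      show mh L f κ t2 + vol C2 = w
      rw [ht2, hC2vol]
      ring
    rcases le_total w q with hwq | hwq
    · refine ⟨B2, t2, hB2m, hB2L, hB2vol, ?_, ?_⟩
      · apply ae_restrict_of_null hB2m
        apply measure_mono_null (t := C2)
        · rintro x ⟨hbad, hxB⟩
          simp only [mem_setOf_eq, not_le] at hbad
          rcases hxB with hlow | hC
          · have : f x ≤ t2 := hlow.1.2
            linarith
          · exact hC
        · rw [← vol_zero_iff (hC2A.trans hA1), hC2vol, min_eq_left hwq]; ring
      · apply ae_restrict_of_forall (hLm.diff hB2m)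
        rintro x ⟨hxL, hxn⟩
        by_cases hxA : x ∈ A
        · have : f x = κ := hxA.2
          rw [this]; exact ht2mem.2
        · by_contra hlt
          push_neg at hlt
          exact hxn (Or.inl ⟨⟨hxL, le_of_lt hlt⟩, hxA⟩)
    · refine ⟨B2, κ, hB2m, hB2L, hB2vol, ?_, ?_⟩
      · exact ae_restrict_of_forall hB2m (fun x hx => hfκ x (hB2L hx))
      · apply ae_restrict_of_null (hLm.diff hB2m)
        apply measure_mono_null (t := lowSet L f κ κ \ lowSet L f κ t2)
        · rintro x ⟨hbad, hxL, hxn⟩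
          simp only [mem_setOf_eq, not_le] at hbad
          have hxA : x ∉ A := by
            intro hxA
            have : f x = κ := hxA.2
            linarith
          refine ⟨⟨⟨hxL, hfκ x hxL⟩, hxA⟩, fun hlow => hxn (Or.inl hlow)⟩
        · rw [← vol_zero_iff (diff_subset.trans ((lowSet_subset κ).trans hL1)),
            vol_lowSet_diff hLc hL1 hf ht2mem.2]
          show mh L f κ κ - mh L f κ t2 = 0
          rw [ht2, min_eq_right hwq]
          ring
  · -- top-type set of measure w
    rcases le_or_gt w p with hwp | hwp
    · obtain ⟨C, hCc, hCm, hCA, hCvol⟩ := hsl w hw0 hwp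
      refine ⟨C, κ, hCm, hCA.trans inter_subset_left, hCvol, ?_, ?_⟩
      · exact ae_restrict_of_forall hCm (fun x hx => le_of_eq ((hCA hx).2).symm)
      · exact ae_restrict_of_forall (hLm.diff hCm) (fun x hx => hfκ x hx.1)
    · set cb : ℝ := vol L - w with hcbdef
      have hcb0 : 0 ≤ cb := by simp only [hcbdef]; linarith
      have hcbq : cb < q := by simp only [hcbdef]; linarith
      obtain ⟨τc, hτcmem, hτcval⟩ := hquant cb hcb0 (le_of_lt hcbq)
      have hτcκ : τc < κ := by
        rcases lt_or_eq_of_le hτcmem.2 with h | h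
        · exact h
        · exfalso
          rw [h] at hτcval
          have : mh L f κ κ = q := rfl
          rw [this] at hτcval
          linarith
      set T : Set ℝ := L ∩ f ⁻¹' Ici τc with hTdef
      have hTc : IsCompact T := compact_preimage hLc hf isClosed_Ici
      have hTm : MeasurableSet T := hTc.measurableSet
      have hTL : T ⊆ L := inter_subset_left
      have hLdiffT : L \ T = L ∩ f ⁻¹' Iio τc := by
        ext x
        simp only [hTdef, mem_diff, mem_inter_iff, mem_preimage, mem_Ici, mem_Iio, not_and,
          not_le]
        constructor
        · rintro ⟨hxL, h⟩
          exact ⟨hxL, h hxL⟩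
        · rintro ⟨hxL, h⟩
          exact ⟨hxL, fun _ => h⟩
      have hIioAe : (L ∩ f ⁻¹' Iio τc : Set ℝ) =ᵐ[volume] lowSet L f κ τc := by
        rw [ae_eq_set]
        refine ⟨?_, ?_⟩
        · have hempty : (L ∩ f ⁻¹' Iio τc) \ lowSet L f κ τc = ∅ := by
            rw [eq_empty_iff_forall_notMem]
            rintro x ⟨⟨hxL, hlt⟩, hns⟩
            have hlt' : f x < τc := hlt
            apply hns
            refine ⟨⟨hxL, le_of_lt hlt'⟩, ?_⟩
            rintro ⟨-, hfx⟩
            have hfx' : f x = κ := hfx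
            linarith
          rw [hempty]
          exact measure_empty
        · apply measure_mono_null (t := (L ∩ f ⁻¹' {τc}) \ (L ∩ f ⁻¹' {κ}))
          · rintro x ⟨⟨⟨hxL, hle⟩, hnA⟩, hnin⟩
            have hle' : f x ≤ τc := hle
            have hge : τc ≤ f x := by
              by_contra hc
              push_neg at hc
              exact hnin ⟨hxL, hc⟩
            exact ⟨⟨hxL, le_antisymm hle' hge⟩, hnA⟩
          · exact level_null hfκ hlev τc
      have hvolT : vol T = w := by
        have h1 : vol (L \ T) = vol L - vol T := vol_diff hL1 hTL hTm
        have h2 : vol (L ∩ f ⁻¹' Iio τc) = cb := by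
          unfold vol
          rw [measure_congr hIioAe]
          exact hτcval
        rw [hLdiffT, h2] at h1
        simp only [hcbdef] at h1
        linarith
      refine ⟨T, τc, hTm, hTL, hvolT, ?_, ?_⟩
      · exact ae_restrict_of_forall hTm (fun x hx => hx.2)
      · apply ae_restrict_of_forall (hLm.diff hTm)
        intro x hx
        rw [hLdiffT] at hx
        exact le_of_lt hx.2

lemma bottom_neg {K : Set ℝ} {f : ℝ → ℝ} (hK1 : K ⊆ Icc 0 1) (hKm : MeasurableSet K)
    (hInt : IntegrableOn f K volume) (hmean : ∫ x in K, f x = 0)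
    {B : Set ℝ} {θ : ℝ} (hBm : MeasurableSet B) (hBL : B ⊆ K)
    (hvolB : 0 < vol B) (hvolKB : 0 < vol (K \ B))
    (hB : ∀ᵐ x ∂volume.restrict B, f x ≤ θ)
    (hT : ∀ᵐ x ∂volume.restrict (K \ B), θ ≤ f x)
    (hnd : volume ({x | f x ≠ 0} ∩ K) ≠ 0) :
    ∫ x in B, f x < 0 := by
  by_contra hc
  push_neg at hc
  have hKBm : MeasurableSet (K \ B) := hKm.diff hBm
  have hsplit : (∫ x in B, f x) + ∫ x in (K \ B), f x = 0 := by
    rw [← setIntegral_union disjoint_sdiff_self_right hKBm (hInt.mono_set hBL)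
      (hInt.mono_set diff_subset), union_diff_cancel hBL]
    exact hmean
  have h1 : ∫ x in B, f x ≤ θ * vol B :=
    setIntegral_le_const (hBL.trans hK1) (hInt.mono_set hBL) hB
  have h2 : θ * vol (K \ B) ≤ ∫ x in (K \ B), f x :=
    const_le_setIntegral (diff_subset.trans hK1) (hInt.mono_set diff_subset) hT
  have hθ0 : 0 ≤ θ := by nlinarith
  have hI2 : ∫ x in (K \ B), f x = 0 := by nlinarith
  have hI1 : ∫ x in B, f x = 0 := by linarith
  -- f = 0 a.e. on K \ B
  have hae2 : f =ᵐ[volume.restrict (K \ B)] 0 := by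
    have hnn : 0 ≤ᵐ[volume.restrict (K \ B)] f := by
      filter_upwards [hT] with x hx
      exact le_trans hθ0 hx
    exact (integral_eq_zero_iff_of_nonneg_ae hnn (hInt.mono_set diff_subset)).1 hI2
  -- θ = 0
  have hKB0 : volume (K \ B) ≠ 0 := by
    intro h0
    rw [← vol_zero_iff (diff_subset.trans hK1)] at h0
    linarith
  have hrne : volume.restrict (K \ B) ≠ 0 := by
    intro h
    apply hKB0
    have hval : volume.restrict (K \ B) (K \ B) = volume (K \ B) := by
      rw [Measure.restrict_apply' hKBm, inter_self]
    rw [h] at hval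
    simpa using hval.symm
  have hθ : θ = 0 := by
    by_contra hθne
    have hθpos : 0 < θ := lt_of_le_of_ne hθ0 (Ne.symm hθne)
    haveI : (ae (volume.restrict (K \ B))).NeBot := ae_neBot.2 hrne
    obtain ⟨x, hx1, hx2⟩ := (hae2.and hT).exists
    rw [hx1] at hx2
    simp at hx2
    linarith
  -- f = 0 a.e. on B
  have hae1 : f =ᵐ[volume.restrict B] 0 := by
    have hnn : 0 ≤ᵐ[volume.restrict B] (fun x => -f x) := by
      filter_upwards [hB] with x hx
      rw [hθ] at hx
      simp
      linarith
    have hIneg : ∫ x in B, -f x = 0 := by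
      rw [integral_neg]
      simp [hI1]
    have := (integral_eq_zero_iff_of_nonneg_ae hnn (hInt.mono_set hBL).neg).1 hIneg
    filter_upwards [this] with x hx
    have : -f x = 0 := hx
    linarith
  -- contradiction with nondegeneracy
  apply hnd
  have hn1 : volume ({x | f x ≠ 0} ∩ B) = 0 := by
    have := hae1
    rw [Filter.EventuallyEq, ae_iff, Measure.restrict_apply' hBm] at this
    exact this
  have hn2 : volume ({x | f x ≠ 0} ∩ (K \ B)) = 0 := by
    have := hae2
    rw [Filter.EventuallyEq, ae_iff, Measure.restrict_apply' hKBm] at this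
    exact this
  have hsub : {x | f x ≠ 0} ∩ K ⊆ ({x | f x ≠ 0} ∩ B) ∪ ({x | f x ≠ 0} ∩ (K \ B)) := by
    rintro x ⟨hfx, hxK⟩
    by_cases hxB : x ∈ B
    · exact Or.inl ⟨hfx, hxB⟩
    · exact Or.inr ⟨hfx, hxK, hxB⟩
  exact measure_mono_null hsub (measure_union_null hn1 hn2)

lemma vol_union_le {S T : Set ℝ} (hS : S ⊆ Icc 0 1) (hT : T ⊆ Icc 0 1) :
    vol (S ∪ T) ≤ vol S + vol T := by
  have h1 : volume (S ∪ T) ≤ volume S + volume T := measure_union_le _ _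
  have := ENNReal.toReal_mono (by rw [ENNReal.add_ne_top]; exact ⟨vol_ne_top hS, vol_ne_top hT⟩) h1
  rw [ENNReal.toReal_add (vol_ne_top hS) (vol_ne_top hT)] at this
  exact this

lemma vol_Ici_le {X : Set ℝ} (hX : X ⊆ Icc 0 1) {a b : ℝ} (hab : a ≤ b) :
    vol (X ∩ Ici a) ≤ vol (X ∩ Ici b) + (b - a) := by
  have hsub : X ∩ Ici a ⊆ (X ∩ Ici b) ∪ (X ∩ Ico a b) := by
    intro x hx
    rcases le_or_gt b x with h | h
    · exact Or.inl ⟨hx.1, h⟩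
    · exact Or.inr ⟨hx.1, hx.2, h⟩
  have h2 : vol (X ∩ Ico a b) ≤ b - a := by
    have hm : volume (X ∩ Ico a b) ≤ ENNReal.ofReal (b - a) := by
      rw [← Real.volume_Ico]
      exact measure_mono inter_subset_right
    calc vol (X ∩ Ico a b) ≤ (ENNReal.ofReal (b - a)).toReal :=
          ENNReal.toReal_mono (by simp) hm
      _ ≤ b - a := by rw [ENNReal.toReal_ofReal (by linarith)]
  calc vol (X ∩ Ici a) ≤ vol ((X ∩ Ici b) ∪ (X ∩ Ico a b)) :=
        vol_mono (union_subset (inter_subset_left.trans hX) (inter_subset_left.trans hX)) hsub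
    _ ≤ vol (X ∩ Ici b) + vol (X ∩ Ico a b) :=
        vol_union_le (inter_subset_left.trans hX) (inter_subset_left.trans hX)
    _ ≤ vol (X ∩ Ici b) + (b - a) := by linarith

lemma cont_vol_Ici {X : Set ℝ} (hX : X ⊆ Icc 0 1) :
    Continuous (fun v => vol (X ∩ Ici v)) := by
  have hanti : Antitone (fun v => vol (X ∩ Ici v)) := by
    intro a b hab
    exact vol_mono (inter_subset_left.trans hX) (inter_subset_inter_right _ (Ici_subset_Ici.2 hab))
  rw [Metric.continuous_iff]
  intro v ε hε
  refine ⟨ε, hε, fun a ha => ?_⟩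
  rw [Real.dist_eq] at ha
  rw [Real.dist_eq, abs_lt]
  rcases le_total a v with h | h
  · have h1 := vol_Ici_le hX h
    have h2 := hanti h
    rw [abs_sub_comm, abs_of_nonneg (by linarith)] at ha
    constructor <;> linarith
  · have h1 := vol_Ici_le hX h
    have h2 := hanti h
    rw [abs_of_nonneg (by linarith)] at ha
    constructor <;> linarith

theorem stmt6 (K : Set ℝ) (hK : IsCompact K) (hK1 : K ⊆ Set.Icc 0 1)
    (hKpos : 0 < volume K) (f : ℝ → ℝ) (hcont : ContinuousOn f K)
    (hmean : ∫ x in K, f x = 0) (κ : ℝ)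
    (hlevel : ∀ y < κ, volume (K ∩ f ⁻¹' {y}) = 0)
    (hconst : ∀ x ∈ K, κ ≤ f x → f x = κ)
    (c : ℝ) (hc : c ∈ Set.Ioo 0 (volume K).toReal) :
    ∃ E : Set ℝ, IsCompact E ∧ E ⊆ K ∩ Set.Ioo (sInf K) (sSup K) ∧
      (volume E).toReal = (volume K).toReal - c ∧ (∫ x in E, f x) = 0 := by
  have hKm : MeasurableSet K := hK.measurableSet
  have hInt : IntegrableOn f K volume := hcont.integrableOn_compact hK
  obtain ⟨hc0, hcl⟩ := hc
  have hvolK : (volume K).toReal = vol K := rfl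
  rw [hvolK] at hcl
  set w : ℝ := vol K - c with hwdef
  have hw0 : 0 < w := by simp only [hwdef]; linarith
  have hfκ : ∀ x ∈ K, f x ≤ κ := by
    intro x hx
    by_contra h
    push_neg at h
    have := hconst x hx (le_of_lt h)
    linarith
  have hKne : K.Nonempty := by
    by_contra h
    rw [not_nonempty_iff_eq_empty] at h
    rw [h] at hKpos
    simp at hKpos
  set x0 : ℝ := sInf K with hx0def
  set x1 : ℝ := sSup K with hx1def
  have hx0K : x0 ∈ K := hK.sInf_mem hKne
  have hx1K : x1 ∈ K := hK.sSup_mem hKne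
  have hx01 : x0 < x1 := by
    rcases lt_or_ge x0 x1 with h | h
    · exact h
    · exfalso
      have hsub : K ⊆ {x0} := by
        intro x hx
        have h1 : x0 ≤ x := csInf_le hK.bddBelow hx
        have h2 : x ≤ x1 := le_csSup hK.bddAbove hx
        have : x = x0 := le_antisymm (by linarith) h1
        exact this
      have hle : volume K ≤ volume ({x0} : Set ℝ) := measure_mono hsub
      rw [Real.volume_singleton] at hle
      exact absurd (le_antisymm hle zero_le) (ne_of_gt hKpos)
  have hφx0 : vol (K ∩ Iic x0) = 0 := by
    have hsub : K ∩ Iic x0 ⊆ {x0} := by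
      rintro x ⟨hxK, hxle⟩
      exact le_antisymm hxle (csInf_le hK.bddBelow hxK)
    have h1 : vol (K ∩ Iic x0) ≤ vol ({x0} : Set ℝ) :=
      vol_mono' (by rw [Real.volume_singleton]; simp) hsub
    have h2 : vol ({x0} : Set ℝ) = 0 := by simp [vol, Real.volume_singleton]
    linarith [vol_nonneg (K ∩ Iic x0)]
  have hφx1 : vol (K ∩ Iic x1) = vol K := by
    have : K ∩ Iic x1 = K := by
      apply inter_eq_left.2
      intro x hx
      exact le_csSup hK.bddAbove hx
    rw [this]
  have hIccIoo : ∀ a b : ℝ, x0 < a → b < x1 → K ∩ Icc a b ⊆ K ∩ Ioo x0 x1 := by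
    intro a b ha hb x hx
    exact ⟨hx.1, lt_of_lt_of_le ha hx.2.1, lt_of_le_of_lt hx.2.2 hb⟩
  by_cases hdeg : volume ({x | f x ≠ 0} ∩ K) = 0
  · -- degenerate case : f = 0 a.e. on K
    have hivt := intermediate_value_Icc (le_of_lt hx01) (cont_vol_Iic hK1).continuousOn
    rw [hφx0, hφx1] at hivt
    obtain ⟨b, hbmem, hbval⟩ := hivt
      (show (vol K - c/2) ∈ Icc 0 (vol K) from ⟨by linarith, by linarith⟩)
    change vol (K ∩ Iic b) = vol K - c/2 at hbval
    have hbx1 : b < x1 := by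
      rcases lt_or_eq_of_le hbmem.2 with h | h
      · exact h
      · exfalso
        rw [h, hφx1] at hbval
        linarith
    have hbx0 : x0 < b := by
      rcases lt_or_eq_of_le hbmem.1 with h | h
      · exact h
      · exfalso
        rw [← h, hφx0] at hbval
        linarith
    set X : Set ℝ := K ∩ Iic b with hXdef
    have hX1 : X ⊆ Icc 0 1 := inter_subset_left.trans hK1
    have hψx0 : vol (X ∩ Ici x0) = vol K - c/2 := by
      have hXX : X ∩ Ici x0 = X := by
        apply inter_eq_left.2
        intro x hx
        exact csInf_le hK.bddBelow hx.1
      rw [hXX, hXdef, hbval]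
    have hψb : vol (X ∩ Ici b) = 0 := by
      have hsub : X ∩ Ici b ⊆ {b} := by
        rintro x ⟨⟨-, hxle⟩, hxge⟩
        exact le_antisymm hxle hxge
      have h1 : vol (X ∩ Ici b) ≤ vol ({b} : Set ℝ) :=
        vol_mono' (by rw [Real.volume_singleton]; simp) hsub
      have h2 : vol ({b} : Set ℝ) = 0 := by simp [vol, Real.volume_singleton]
      linarith [vol_nonneg (X ∩ Ici b)]
    have hivt2 := intermediate_value_Icc' (le_of_lt hbx0) (cont_vol_Ici hX1).continuousOn
    rw [hψx0, hψb] at hivt2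
    obtain ⟨a, hamem, haval⟩ := hivt2
      (show w ∈ Icc 0 (vol K - c/2) from ⟨by linarith, by simp only [hwdef]; linarith⟩)
    change vol (X ∩ Ici a) = w at haval
    have hax0 : x0 < a := by
      rcases lt_or_eq_of_le hamem.1 with h | h
      · exact h
      · exfalso
        rw [← h, hψx0] at haval
        simp only [hwdef] at haval
        linarith
    have hab : a ≤ b := hamem.2
    set E : Set ℝ := K ∩ Icc a b with hEdef
    have hEX : E = X ∩ Ici a := by
      ext x
      constructor
      · rintro ⟨hxK, h1, h2⟩
        exact ⟨⟨hxK, h2⟩, h1⟩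
      · rintro ⟨⟨hxK, h2⟩, h1⟩
        exact ⟨hxK, h1, h2⟩
    have hEc : IsCompact E :=
      hK.of_isClosed_subset (hK.isClosed.inter isClosed_Icc) inter_subset_left
    have hEm : MeasurableSet E := hEc.measurableSet
    refine ⟨E, hEc, hIccIoo a b hax0 hbx1, ?_, ?_⟩
    · show vol E = (volume K).toReal - c
      rw [hvolK, hEX]
      exact haval
    · have hae : f =ᵐ[volume.restrict E] 0 := by
        rw [Filter.EventuallyEq, ae_iff, Measure.restrict_apply' hEm]
        apply measure_mono_null _ hdeg
        rintro x ⟨hfx, hxE⟩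
        exact ⟨hfx, hxE.1⟩
      rw [integral_congr_ae hae]
      simp
  · -- nondegenerate case
    obtain ⟨⟨B, θB, hBm, hBK, hBvol, hBa, hBb⟩, ⟨T, θT, hTm, hTK, hTvol, hTa, hTb⟩⟩ :=
      exists_bot_top hK hK1 hcont hfκ hlevel hKne (le_of_lt hw0)
        (by simp only [hwdef]; linarith)
    have hvolKB : vol (K \ B) = c := by
      rw [vol_diff hK1 hBK hBm, hBvol]
      simp only [hwdef]
      ring
    have hvolKT : vol (K \ T) = c := by
      rw [vol_diff hK1 hTK hTm, hTvol]
      simp only [hwdef]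
      ring
    have hBneg : ∫ x in B, f x < 0 :=
      bottom_neg hK1 hKm hInt hmean hBm hBK (by rw [hBvol]; exact hw0)
        (by rw [hvolKB]; exact hc0) hBa hBb hdeg
    have hndneg : volume ({x | (fun y => -f y) x ≠ 0} ∩ K) ≠ 0 := by
      have hseteq : {x | (fun y => -f y) x ≠ 0} = {x | f x ≠ 0} := by
        ext x
        simp
      rw [hseteq]
      exact hdeg
    have hTpos : 0 < ∫ x in T, f x := by
      have h := bottom_neg (f := fun y => -f y) (θ := -θT) hK1 hKm hInt.neg
        (by rw [integral_neg, hmean]; ring) hTm hTK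
        (by rw [hTvol]; exact hw0) (by rw [hvolKT]; exact hc0)
        (by filter_upwards [hTa] with x hx; exact neg_le_neg hx)
        (by filter_upwards [hTb] with x hx; exact neg_le_neg hx)
        hndneg
      rw [integral_neg] at h
      linarith
    obtain ⟨M₀, hM₀⟩ := hK.exists_bound_of_continuousOn hcont
    set M : ℝ := max M₀ 0 with hMdef
    have hM : ∀ x ∈ K, ‖f x‖ ≤ M := fun x hx => (hM₀ x hx).trans (le_max_left _ _)
    have hM0 : 0 ≤ M := le_max_right _ _
    have habs : ∀ S : Set ℝ, S ⊆ K → |∫ x in S, f x| ≤ M * vol S := by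
      intro S hSK
      rw [← Real.norm_eq_abs]
      apply norm_setIntegral_le_of_norm_le_const
      · exact lt_top_iff_ne_top.2 (vol_ne_top (hSK.trans hK1))
      · exact fun x hx => hM x (hSK hx)
    set εB : ℝ := -∫ x in B, f x with hεBdef
    set εT : ℝ := ∫ x in T, f x with hεTdef
    have hεB0 : 0 < εB := by simp only [hεBdef]; linarith
    have hεT0 : 0 < εT := hTpos
    have hM1 : (0:ℝ) < M + 1 := by linarith
    set δ : ℝ := min (min ((x1 - x0)/4) (c/8)) (min (εB/(8*(M+1))) (εT/(8*(M+1)))) with hδdef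
    have hδ0 : 0 < δ := by
      apply lt_min (lt_min (by linarith) (by linarith)) (lt_min (by positivity) (by positivity))
    have hδa : δ ≤ (x1 - x0)/4 := le_trans (min_le_left _ _) (min_le_left _ _)
    have hδc : δ ≤ c/8 := le_trans (min_le_left _ _) (min_le_right _ _)
    have hδB : δ ≤ εB/(8*(M+1)) := le_trans (min_le_right _ _) (min_le_left _ _)
    have hδT : δ ≤ εT/(8*(M+1)) := le_trans (min_le_right _ _) (min_le_right _ _)
    set a : ℝ := x0 + δ with hadef
    set b : ℝ := x1 - δ with hbdef
    have hax0 : x0 < a := by simp only [hadef]; linarith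
    have hbx1 : b < x1 := by simp only [hbdef]; linarith
    have hab : a ≤ b := by simp only [hadef, hbdef]; linarith
    set K' : Set ℝ := K ∩ Icc a b with hK'def
    have hK'c : IsCompact K' :=
      hK.of_isClosed_subset (hK.isClosed.inter isClosed_Icc) inter_subset_left
    have hK'K : K' ⊆ K := inter_subset_left
    have hK'1 : K' ⊆ Icc 0 1 := hK'K.trans hK1
    have hK'm : MeasurableSet K' := hK'c.measurableSet
    have hν1 : vol (K ∩ Iic a) ≤ δ := by
      have h := vol_Iic_le hK1 (le_of_lt hax0)
      rw [hφx0] at h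
      have : a - x0 = δ := by simp only [hadef]; ring
      linarith
    have hν2 : vol K - vol (K ∩ Iic b) ≤ δ := by
      have h := vol_Iic_le hK1 (le_of_lt hbx1)
      rw [hφx1] at h
      have : x1 - b = δ := by simp only [hbdef]; ring
      linarith
    have hν : vol (K \ K') ≤ 2*δ := by
      have hsub : K \ K' ⊆ (K ∩ Iic a) ∪ (K \ (K ∩ Iic b)) := by
        rintro x ⟨hxK, hxn⟩
        rcases le_or_gt x a with h | h
        · exact Or.inl ⟨hxK, h⟩
        · rcases le_or_gt x b with h2 | h2
          · exact absurd ⟨hxK, le_of_lt h, h2⟩ hxn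
          · exact Or.inr ⟨hxK, fun hc => absurd hc.2 (not_le.2 h2)⟩
      have h1 : vol (K \ K') ≤ vol ((K ∩ Iic a) ∪ (K \ (K ∩ Iic b))) :=
        vol_mono' (vol_ne_top (union_subset (inter_subset_left.trans hK1)
          (diff_subset.trans hK1))) hsub
      have h2 : vol ((K ∩ Iic a) ∪ (K \ (K ∩ Iic b))) ≤
          vol (K ∩ Iic a) + vol (K \ (K ∩ Iic b)) :=
        vol_union_le (inter_subset_left.trans hK1) (diff_subset.trans hK1)
      have h3 : vol (K \ (K ∩ Iic b)) = vol K - vol (K ∩ Iic b) :=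
        vol_diff hK1 inter_subset_left (hKm.inter measurableSet_Iic)
      linarith
    have hvolK' : vol K' = vol K - vol (K \ K') := by
      have h := vol_diff hK1 hK'K hK'm
      linarith
    have hwK' : w < vol K' := by
      rw [hvolK']
      simp only [hwdef]
      linarith
    have hfill : ∀ S : Set ℝ, MeasurableSet S → S ⊆ K → vol S = w →
        ∃ S', MeasurableSet S' ∧ S' ⊆ K' ∧ vol S' = w ∧
          |(∫ x in S', f x) - ∫ x in S, f x| ≤ 2 * (M * (2*δ)) := by
      intro S hSm hSK hSvol
      set X : Set ℝ := K' \ S with hXdef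
      have hXm : MeasurableSet X := hK'm.diff hSm
      have hX1 : X ⊆ Icc 0 1 := diff_subset.trans hK'1
      have hSinter : vol (S ∩ K') = vol S - vol (S \ K') := by
        have hs : vol S = vol (S \ K') + vol (S ∩ K') := by
          rw [← vol_union (diff_subset.trans (hSK.trans hK1))
            (inter_subset_left.trans (hSK.trans hK1)) disjoint_sdiff_inter
            (hSm.inter hK'm), diff_union_inter]
        linarith
      have hSout : vol (S \ K') ≤ 2*δ := by
        have : vol (S \ K') ≤ vol (K \ K') :=
          vol_mono (diff_subset.trans hK1) (fun x hx => ⟨hSK hx.1, hx.2⟩)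
        linarith
      set β : ℝ := w - vol (S ∩ K') with hβdef
      have hβval : β = vol (S \ K') := by
        simp only [hβdef]
        rw [hSinter, hSvol]
        ring
      have hβ0 : 0 ≤ β := by
        rw [hβval]
        exact vol_nonneg _
      have hβX : β ≤ vol X := by
        have hXeq : X = K' \ (S ∩ K') := by
          ext x
          simp only [hXdef, mem_diff, mem_inter_iff, not_and]
          constructor
          · rintro ⟨hxK', hxn⟩
            exact ⟨hxK', fun hS _ => hxn hS⟩
          · rintro ⟨hxK', hxn⟩
            exact ⟨hxK', fun hS => hxn hS hxK'⟩
        have hXvol : vol X = vol K' - vol (S ∩ K') := by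
          rw [hXeq]
          exact vol_diff hK'1 inter_subset_right (hSm.inter hK'm)
        rw [hXvol]
        simp only [hβdef]
        linarith
      obtain ⟨v, hv⟩ := sliceIic hX1 hβ0 hβX
      set D : Set ℝ := X ∩ Iic v with hDdef
      have hDm : MeasurableSet D := hXm.inter measurableSet_Iic
      have hDX : D ⊆ X := inter_subset_left
      have hDK : D ⊆ K := (hDX.trans diff_subset).trans hK'K
      have hdisjD : Disjoint (S ∩ K') D :=
        disjoint_left.2 fun x hx hxD => (hDX hxD).2 hx.1
      refine ⟨(S ∩ K') ∪ D, (hSm.inter hK'm).union hDm, ?_, ?_, ?_⟩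
      · exact union_subset inter_subset_right (hDX.trans diff_subset)
      · rw [vol_union (inter_subset_left.trans (hSK.trans hK1)) (hDK.trans hK1) hdisjD hDm, hv]
        simp only [hβdef]
        ring
      · have hIS : IntegrableOn f S volume := hInt.mono_set hSK
        have hsplitS : ∫ x in S, f x = (∫ x in S ∩ K', f x) + ∫ x in S \ K', f x := by
          rw [← setIntegral_union (disjoint_left.2 fun x hx hxd => hxd.2 hx.2)
            (hSm.diff hK'm) (hIS.mono_set inter_subset_left) (hIS.mono_set diff_subset),
            inter_union_diff]
        have hIU : ∫ x in (S ∩ K') ∪ D, f x = (∫ x in S ∩ K', f x) + ∫ x in D, f x :=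
          setIntegral_union hdisjD hDm (hIS.mono_set inter_subset_left)
            (hInt.mono_set hDK)
        have h1 : |∫ x in S \ K', f x| ≤ M * (2*δ) := by
          have := habs (S \ K') (diff_subset.trans hSK)
          have hmul : M * vol (S \ K') ≤ M * (2*δ) := mul_le_mul_of_nonneg_left hSout hM0
          linarith
        have h2 : |∫ x in D, f x| ≤ M * (2*δ) := by
          have := habs D hDK
          have hvD : vol D ≤ 2*δ := by
            rw [hv, hβval]
            exact hSout
          have hmul : M * vol D ≤ M * (2*δ) := mul_le_mul_of_nonneg_left hvD hM0
          linarith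
        have heq : (∫ x in (S ∩ K') ∪ D, f x) - ∫ x in S, f x
            = (∫ x in D, f x) - ∫ x in S \ K', f x := by
          rw [hIU, hsplitS]
          ring
        rw [heq]
        calc |(∫ x in D, f x) - ∫ x in S \ K', f x|
            ≤ |∫ x in D, f x| + |∫ x in S \ K', f x| := abs_sub _ _
          _ ≤ 2 * (M * (2*δ)) := by linarith
    obtain ⟨Y', hY'm, hY'K', hY'vol, hY'int⟩ := hfill B hBm hBK hBvol
    obtain ⟨Z', hZ'm, hZ'K', hZ'vol, hZ'int⟩ := hfill T hTm hTK hTvol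
    have hsmall : ∀ ε : ℝ, 0 < ε → δ ≤ ε/(8*(M+1)) → 2 * (M * (2*δ)) < ε := by
      intro ε hε hδε
      have h1 : M * δ ≤ M * (ε/(8*(M+1))) := mul_le_mul_of_nonneg_left hδε hM0
      have h2 : M * (ε/(8*(M+1))) ≤ ε/8 := by
        have hkey : M / (M+1) ≤ 1 := by
          rw [div_le_one hM1]
          linarith
        have heq : M * (ε/(8*(M+1))) = (M/(M+1)) * (ε/8) := by
          rw [mul_div_assoc', div_mul_div_comm]
          ring_nf
        rw [heq]
        calc (M/(M+1)) * (ε/8) ≤ 1 * (ε/8) :=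
              mul_le_mul_of_nonneg_right hkey (by positivity)
          _ = ε/8 := by ring
      linarith
    have hY'neg : ∫ x in Y', f x < 0 := by
      have h := (abs_le.1 hY'int).2
      have := hsmall εB hεB0 hδB
      simp only [hεBdef] at this
      linarith
    have hZ'pos : 0 < ∫ x in Z', f x := by
      have h := (abs_le.1 hZ'int).1
      have := hsmall εT hεT0 hδT
      simp only [hεTdef] at this
      linarith
    have hlev' : ∀ y < κ, volume (K' ∩ f ⁻¹' {y}) = 0 := by
      intro y hy
      apply measure_mono_null _ (hlevel y hy)
      rintro x ⟨hx1, hx2⟩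
      exact ⟨hK'K hx1, hx2⟩
    obtain ⟨E, hEc, hEK', hEvol, hEint⟩ := lemA hK'c hK'1 (hcont.mono hK'K)
      (fun x hx => hfκ x (hK'K hx)) hlev' hw0 hwK'
      hY'm hY'K' hY'vol hY'neg hZ'm hZ'K' hZ'vol hZ'pos
    refine ⟨E, hEc, ?_, ?_, hEint⟩
    · exact hEK'.trans (hIccIoo a b hax0 hbx1)
    · show vol E = (volume K).toReal - c
      rw [hvolK]
      exact hEvol
end Machinery
end

section
/- Let $a \in (0,1)$, $\alpha, \beta \in \mathbb{R}$, and $f = \alpha\chi_{[0,a)} + \beta\chi_{[a,1)}$ with $\int_0^1 f\,d\lambda = 0$. Then there exists $g \in L_\infty[0,1)$ with $\|g\|_\infty \leq \|f\|_\infty$ and a Lebesgue measure preserving bijection $T$ of $[0,1)$ such that $f = g \circ T - g$ almost everywhere. -/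
open MeasureTheory Set

theorem stmt11 (a α β : ℝ) (ha : a ∈ Set.Ioo (0:ℝ) 1) (f : ℝ → ℝ)
    (hf : f = fun t => α * Set.indicator (Set.Ico (0:ℝ) a) (fun _ => (1:ℝ)) t
        + β * Set.indicator (Set.Ico a 1) (fun _ => (1:ℝ)) t)
    (hmean : ∫ t in Set.Ico (0:ℝ) 1, f t = 0) :
    ∃ g T : ℝ → ℝ,
      MemLp g ⊤ (volume.restrict (Set.Ico (0:ℝ) 1)) ∧
      eLpNorm g ⊤ (volume.restrict (Set.Ico (0:ℝ) 1)) ≤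
        eLpNorm f ⊤ (volume.restrict (Set.Ico (0:ℝ) 1)) ∧
      Set.BijOn T (Set.Ico (0:ℝ) 1) (Set.Ico (0:ℝ) 1) ∧
      MeasurePreserving T (volume.restrict (Set.Ico (0:ℝ) 1))
        (volume.restrict (Set.Ico (0:ℝ) 1)) ∧
      f =ᵐ[volume.restrict (Set.Ico (0:ℝ) 1)] fun t => g (T t) - g t := by
  obtain ⟨ha0, ha1⟩ := ha
  have h1a : (0:ℝ) < 1 - a := by linarith
  set c : ℝ := α / (1 - a) with hc
  set μ := volume.restrict (Set.Ico (0:ℝ) 1) with hμ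
  -- mean zero consequence
  have hint : α * a + β * (1 - a) = 0 := by
    rw [hf] at hmean
    have key : ∀ b d : ℝ, Integrable (fun t => (Set.Ico b d).indicator (fun _ => (1:ℝ)) t) μ := by
      intro b d
      rw [integrable_indicator_iff measurableSet_Ico]
      refine (integrableOn_const_iff (by simp)).mpr (Or.inr ?_)
      rw [hμ, Measure.restrict_apply measurableSet_Ico]
      exact (measure_mono inter_subset_right).trans_lt (by simp [Real.volume_Ico])
    rw [integral_add ((key 0 a).const_mul α) ((key a 1).const_mul β),
      integral_const_mul, integral_const_mul, integral_indicator_const _ measurableSet_Ico,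
      integral_indicator_const _ measurableSet_Ico, hμ, measureReal_def, measureReal_def,
      Measure.restrict_apply measurableSet_Ico, Measure.restrict_apply measurableSet_Ico,
      Set.Ico_inter_Ico, Set.Ico_inter_Ico] at hmean
    simp only [smul_eq_mul, mul_one, max_self, Real.volume_Ico, min_self, sub_zero,
      max_eq_left ha0.le, min_eq_left ha1.le] at hmean
    rw [ENNReal.toReal_ofReal ha0.le, ENNReal.toReal_ofReal (by linarith)] at hmean
    linarith
  have hα : α = c * (1 - a) := by rw [hc, div_mul_cancel₀ _ h1a.ne']
  have hβ : β = -(c * a) := by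
    have : c * (1 - a) * a + β * (1 - a) = 0 := by rw [← hα]; exact hint
    have h2 : (c * a + β) * (1 - a) = 0 := by ring_nf; ring_nf at this; linarith
    rcases mul_eq_zero.mp h2 with h | h
    · linarith
    · linarith
  refine ⟨fun t => c * (t - 1/2), fun t => if t < a then t + (1 - a) else t - a,
    ?_, ?_, ?_, ?_, ?_⟩
  · -- Memℒp
    exact memLp_top_of_bound ((continuous_const.mul (continuous_id.sub continuous_const)).aestronglyMeasurable)
      (|c| / 2) (by
        filter_upwards [ae_restrict_mem measurableSet_Ico] with t ht
        rw [Real.norm_eq_abs, abs_mul]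
        have : |t - 1/2| ≤ 1/2 := by
          rw [abs_le]; constructor <;> [linarith [ht.1]; linarith [ht.2]]
        calc |c| * |t - 1/2| ≤ |c| * (1/2) := by
              exact mul_le_mul_of_nonneg_left this (abs_nonneg c)
          _ = |c| / 2 := by ring)
  · -- norm bound
    have hg_le : eLpNorm (fun t => c * (t - 1/2)) ⊤ μ ≤ ENNReal.ofReal (|c| / 2) := by
      rw [eLpNorm_exponent_top]
      refine eLpNormEssSup_le_of_ae_bound ?_
      filter_upwards [ae_restrict_mem measurableSet_Ico] with t ht
      rw [Real.norm_eq_abs, abs_mul]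
      have : |t - 1/2| ≤ 1/2 := by
        rw [abs_le]; constructor <;> [linarith [ht.1]; linarith [ht.2]]
      calc |c| * |t - 1/2| ≤ |c| * (1/2) :=
            mul_le_mul_of_nonneg_left this (abs_nonneg c)
        _ = |c| / 2 := by ring
    -- lower bounds for f norm
    have hfval : ∀ v w : ℝ, w ≤ a → a ≤ v → μ (Set.Ico v w) ≠ 0 →
        (∀ t ∈ Set.Ico v w, f t = α) → True := fun _ _ _ _ _ _ => trivial
    have hlow : ∀ (s : Set ℝ) (v : ℝ), MeasurableSet s → μ s ≠ 0 → (∀ t ∈ s, f t = v) →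
        ENNReal.ofReal |v| ≤ eLpNorm f ⊤ μ := by
      intro s v hs hs0 hv
      obtain ⟨x, hxs, hx⟩ := Measure.exists_mem_of_measure_ne_zero_of_ae hs0
        (ae_restrict_of_ae (ae_le_eLpNormEssSup (f := f)))
      rw [eLpNorm_exponent_top]
      calc ENNReal.ofReal |v| = (‖f x‖₊ : ENNReal) := by
            rw [hv x hxs, ← Real.norm_eq_abs, ofReal_norm, enorm_eq_nnnorm]
        _ ≤ _ := hx
    have hα_le : ENNReal.ofReal |α| ≤ eLpNorm f ⊤ μ := by
      refine hlow (Set.Ico 0 a) α measurableSet_Ico ?_ ?_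
      · rw [hμ, Measure.restrict_apply measurableSet_Ico, Set.Ico_inter_Ico]
        simp only [max_self, min_eq_left ha1.le, Real.volume_Ico, sub_zero]
        simp only [ne_eq, ENNReal.ofReal_eq_zero, not_le]
        linarith
      · intro t ht
        rw [hf]
        simp [Set.indicator_of_mem ht, Set.indicator_of_notMem (by simp [mem_Ico]; intro h; linarith [ht.2] : t ∉ Set.Ico a 1)]
    have hβ_le : ENNReal.ofReal |β| ≤ eLpNorm f ⊤ μ := by
      refine hlow (Set.Ico a 1) β measurableSet_Ico ?_ ?_
      · rw [hμ, Measure.restrict_apply measurableSet_Ico, Set.Ico_inter_Ico]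
        simp only [min_self, max_eq_left ha0.le, Real.volume_Ico]
        simp only [ne_eq, ENNReal.ofReal_eq_zero, not_le]
        linarith
      · intro t ht
        rw [hf]
        simp [Set.indicator_of_mem ht, Set.indicator_of_notMem (by simp [mem_Ico]; intro h; linarith [ht.1] : t ∉ Set.Ico 0 a)]
    refine hg_le.trans ?_
    rcases le_total a (1/2) with h | h
    · refine le_trans ?_ hα_le
      apply ENNReal.ofReal_le_ofReal
      rw [hα, abs_mul, abs_of_pos h1a]
      nlinarith [abs_nonneg c]
    · refine le_trans ?_ hβ_le
      apply ENNReal.ofReal_le_ofReal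
      rw [hβ, abs_neg, abs_mul, abs_of_pos ha0]
      nlinarith [abs_nonneg c]
  · -- BijOn
    have hmt : Set.MapsTo (fun t => if t < a then t + (1 - a) else t - a)
        (Set.Ico (0:ℝ) 1) (Set.Ico (0:ℝ) 1) := by
      intro t ht
      by_cases h : t < a <;> simp [h, mem_Ico] <;> constructor <;> linarith [ht.1, ht.2]
    have hms : Set.MapsTo (fun t => if t < 1 - a then t + a else t - (1 - a))
        (Set.Ico (0:ℝ) 1) (Set.Ico (0:ℝ) 1) := by
      intro t ht
      by_cases h : t < 1 - a <;> simp [h, mem_Ico] <;> constructor <;> linarith [ht.1, ht.2]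
    refine Set.InvOn.bijOn ⟨?_, ?_⟩ hmt hms
    · intro t ht
      by_cases h : t < a
      · have : ¬ (t + (1 - a) < 1 - a) := by push_neg; linarith [ht.1]
        simp [h, this]
      · have : t - a < 1 - a := by linarith [ht.2]
        simp [h, this]
    · intro t ht
      by_cases h : t < 1 - a
      · have : ¬ (t + a < a) := by push_neg; linarith [ht.1]
        simp [h, this]
      · have : t - (1 - a) < a := by linarith [ht.2]
        simp [h, this]
  · -- MeasurePreserving
    have hTm : Measurable (fun t : ℝ => if t < a then t + (1 - a) else t - a) :=
      Measurable.ite (measurableSet_lt measurable_id measurable_const)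
        (measurable_id.add_const _) (measurable_id.sub_const _)
    refine ⟨hTm, ?_⟩
    ext E hE
    rw [Measure.map_apply hTm hE, hμ, Measure.restrict_apply hE,
      Measure.restrict_apply (hTm hE)]
    have hset : (fun t : ℝ => if t < a then t + (1 - a) else t - a) ⁻¹' E ∩ Set.Ico 0 1
        = ((· + (1 - a)) ⁻¹' (E ∩ Set.Ico (1 - a) 1)) ∪ ((· - a) ⁻¹' (E ∩ Set.Ico 0 (1 - a))) := by
      ext t
      simp only [mem_inter_iff, mem_preimage, mem_union, mem_Ico]
      constructor
      · rintro ⟨hTE, ht0, ht1⟩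
        by_cases h : t < a
        · left; rw [if_pos h] at hTE; exact ⟨hTE, by linarith, by linarith⟩
        · right; rw [if_neg h] at hTE; push_neg at h; exact ⟨hTE, by linarith, by linarith⟩
      · rintro (⟨hE', h1, h2⟩ | ⟨hE', h1, h2⟩)
        · have h : t < a := by linarith
          exact ⟨by rw [if_pos h]; exact hE', by linarith, by linarith⟩
        · have h : ¬ t < a := by push_neg; linarith
          exact ⟨by rw [if_neg h]; exact hE', by linarith, by linarith⟩
    rw [hset]
    have hdisj : Disjoint ((· + (1 - a)) ⁻¹' (E ∩ Set.Ico (1 - a) 1))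
        ((· - a) ⁻¹' (E ∩ Set.Ico 0 (1 - a))) := by
      rw [Set.disjoint_left]
      intro t h1 h2
      simp only [mem_preimage, mem_inter_iff, mem_Ico] at h1 h2
      linarith [h1.2.1, h2.2.2]
    rw [measure_union hdisj ((measurable_id.sub_const a) (hE.inter measurableSet_Ico))]
    have e1 : volume ((· + (1 - a)) ⁻¹' (E ∩ Set.Ico (1 - a) 1)) = volume (E ∩ Set.Ico (1 - a) 1) :=
      measure_preimage_add_right volume (1 - a) _
    have e2 : volume ((· - a) ⁻¹' (E ∩ Set.Ico 0 (1 - a))) = volume (E ∩ Set.Ico 0 (1 - a)) := by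
      have : (· - a) = (· + (-a)) := by funext x; ring
      rw [this]
      exact measure_preimage_add_right volume (-a) _
    rw [e1, e2]
    have hEsplit : E ∩ Set.Ico (0:ℝ) 1 = (E ∩ Set.Ico 0 (1 - a)) ∪ (E ∩ Set.Ico (1 - a) 1) := by
      rw [← Set.inter_union_distrib_left, Set.Ico_union_Ico_eq_Ico (by linarith) (by linarith)]
    have hd2 : Disjoint (E ∩ Set.Ico (0:ℝ) (1 - a)) (E ∩ Set.Ico (1 - a) 1) :=
      Disjoint.mono inf_le_right inf_le_right Set.Ico_disjoint_Ico_same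
    rw [hEsplit, measure_union hd2 (hE.inter measurableSet_Ico), add_comm]
  · -- a.e. equality
    filter_upwards [ae_restrict_mem measurableSet_Ico] with t ht
    rw [hf]
    by_cases h : t < a
    · have h1 : t ∈ Set.Ico 0 a := ⟨ht.1, h⟩
      have h2 : t ∉ Set.Ico a 1 := by simp [mem_Ico]; intro hh; linarith
      simp only [Set.indicator_of_mem h1, Set.indicator_of_notMem h2, if_pos h]
      rw [hα]; ring
    · have h1 : t ∉ Set.Ico 0 a := by simp [mem_Ico]; intro hh; linarith
      have h2 : t ∈ Set.Ico a 1 := ⟨not_lt.mp h, ht.2⟩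
      simp only [Set.indicator_of_mem h2, Set.indicator_of_notMem h1, if_neg h]
      rw [hβ]; ring
end
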